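/- arXiv:1803.08265 — 11 statements merged into one kernel-verified Lean document; each statement's English description precedes it below -/
import Mathlib

section
/- In the ring of formal power series ℚ[[u,z]], the identity exp(A(u,z))·(1 − z·u·Cat(u)) = 1 holds, where A(u,z) = ∑_{n≥0} ∑_{j=0}^{n} (1/(n+1))·C(2n−j, n)·z^{j+1}·u^{n+1} and Cat(u) = ∑_{n≥0} (1/(n+1))·C(2n,n)·u^n. -/
open MvPowerSeries

/-- The series `A(u,z) = ∑_{n≥0} ∑_{j=0}^{n} (1/(n+1))·C(2n−j,n)·z^{j+1}·u^{n+1}`,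
given by its coefficients: the coefficient of `u^{n+1} z^{j+1}` (with `j ≤ n`) is
`(1/(n+1))·C(2n−j, n)`.  Variable `0` is `u`, variable `1` is `z`. -/
noncomputable def A : MvPowerSeries (Fin 2) ℚ :=
  fun d => if 1 ≤ d 1 ∧ d 1 ≤ d 0 then
    (1 / (d 0 : ℚ)) * ((2 * (d 0 - 1) - (d 1 - 1)).choose (d 0 - 1) : ℚ) else 0

/-- The Catalan series `Cat(u) = ∑_{n≥0} (1/(n+1))·C(2n,n)·u^n`, viewed in `ℚ[[u,z]]`. -/
noncomputable def CatU : MvPowerSeries (Fin 2) ℚ :=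
  fun d => if d 1 = 0 then ((2 * d 0).choose (d 0) : ℚ) / (d 0 + 1) else 0

/-- The exponential `exp(f) = ∑_{k≥0} f^k/k!` of a formal power series `f` with zero
constant term, defined coefficientwise (the sum is finite in each coefficient). -/
noncomputable def expOf (f : MvPowerSeries (Fin 2) ℚ) : MvPowerSeries (Fin 2) ℚ :=
  fun d => ∑ k ∈ Finset.range (d 0 + d 1 + 1),
    (MvPowerSeries.coeff d (f ^ k)) / (k.factorial : ℚ)

namespace ExpAProof

open Finset

noncomputable abbrev e0 : Fin 2 →₀ ℕ := Finsupp.single 0 1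
noncomputable abbrev e1 : Fin 2 →₀ ℕ := Finsupp.single 1 1
noncomputable abbrev u1 (m : ℕ) : Fin 2 →₀ ℕ := Finsupp.single 0 m

lemma degree2 (d : Fin 2 →₀ ℕ) : d.degree = d 0 + d 1 := by
  have : d.degree = ∑ i : Fin 2, d i := by
    refine Finset.sum_subset (Finset.subset_univ _) (fun i _ h => ?_)
    simpa using Finsupp.notMem_support_iff.mp h
  rw [this, Fin.sum_univ_two]

/-- Vanishing of coefficients of high powers. -/
lemma coeff_pow_eq_zero {f : MvPowerSeries (Fin 2) ℚ} (hf : constantCoeff f = 0)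
    {d : Fin 2 →₀ ℕ} {k : ℕ} (h : d 0 + d 1 < k) : coeff d (f ^ k) = 0 := by
  apply coeff_eq_zero_of_constantCoeff_nilpotent (m := 1) (by simpa using hf)
  rw [degree2]; omega

noncomputable def Dz (f : MvPowerSeries (Fin 2) ℚ) : MvPowerSeries (Fin 2) ℚ :=
  fun d => (d 1 + 1 : ℚ) * f (d + e1)

lemma coeff_Dz (f : MvPowerSeries (Fin 2) ℚ) (d : Fin 2 →₀ ℕ) :
    coeff d (Dz f) = (d 1 + 1 : ℚ) * coeff (d + e1) f := rfl

lemma Dz_add (f g : MvPowerSeries (Fin 2) ℚ) : Dz (f + g) = Dz f + Dz g := by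
  ext d
  simp [coeff_Dz, map_add, mul_add]

lemma Dz_X0 : Dz (X 0 : MvPowerSeries (Fin 2) ℚ) = 0 := by
  ext d
  rw [coeff_Dz, coeff_X]
  have : ¬ (d + e1 = Finsupp.single 0 1) := by
    intro h
    have := DFunLike.congr_fun h 1
    simp [e1] at this
  simp [this]

lemma Dz_X1 : Dz (X 1 : MvPowerSeries (Fin 2) ℚ) = 1 := by
  ext d
  rw [coeff_Dz, coeff_X]
  by_cases hd : d = 0
  · subst hd; simp [e1]
  · have : ¬ (d + e1 = e1) := by
      intro h
      apply hd
      have := add_right_cancel (h.trans (zero_add e1).symm)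
      exact this
    simp only [this, if_false, mul_zero]
    rw [coeff_one, if_neg hd]


lemma sum_shift (F : (Fin 2 →₀ ℕ) → (Fin 2 →₀ ℕ) → ℚ) (d : Fin 2 →₀ ℕ) :
    ∑ pq ∈ Finset.HasAntidiagonal.antidiagonal (d + e1), (pq.1 1 : ℚ) * F pq.1 pq.2
      = ∑ pq ∈ Finset.HasAntidiagonal.antidiagonal d, ((pq.1 1 : ℚ) + 1) * F (pq.1 + e1) pq.2 := by
  have h1 : ∑ pq ∈ Finset.HasAntidiagonal.antidiagonal (d + e1), (pq.1 1 : ℚ) * F pq.1 pq.2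
      = ∑ pq ∈ (Finset.HasAntidiagonal.antidiagonal (d + e1)).filter (fun pq => pq.1 1 ≠ 0),
          (pq.1 1 : ℚ) * F pq.1 pq.2 := by
    refine (Finset.sum_subset (Finset.filter_subset _ _) (fun pq _ h => ?_)).symm
    simp only [Finset.mem_filter, not_and, ne_eq, not_not] at h
    rcases eq_or_ne (pq.1 1) 0 with h0 | h0
    · rw [h0]; simp
    · exact absurd (h (Finset.HasAntidiagonal.mem_antidiagonal.mpr (Finset.HasAntidiagonal.mem_antidiagonal.mp ‹_›))) h0
  rw [h1]
  refine Finset.sum_bij' (fun pq _ => (pq.1 - e1, pq.2)) (fun pq _ => (pq.1 + e1, pq.2))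
    ?_ ?_ ?_ ?_ ?_
  · rintro ⟨p, q⟩ hpq
    simp only [Finset.mem_filter, Finset.HasAntidiagonal.mem_antidiagonal] at hpq ⊢
    obtain ⟨hsum, hne⟩ := hpq
    have hle : e1 ≤ p := by
      rw [Finsupp.single_le_iff]; omega
    have : p - e1 + e1 = p := tsub_add_cancel_of_le hle
    have h2 : p - e1 + q + e1 = d + e1 := by
      rw [show p - e1 + q + e1 = p - e1 + e1 + q from add_right_comm _ _ _, this, hsum]
    exact add_right_cancel h2
  · rintro ⟨p, q⟩ hpq
    simp only [Finset.HasAntidiagonal.mem_antidiagonal] at hpq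
    simp only [Finset.mem_filter, Finset.HasAntidiagonal.mem_antidiagonal]
    constructor
    · rw [← hpq]; exact add_right_comm _ _ _
    · simp
  · rintro ⟨p, q⟩ hpq
    simp only [Finset.mem_filter, Finset.HasAntidiagonal.mem_antidiagonal] at hpq
    have hle : e1 ≤ p := by rw [Finsupp.single_le_iff]; omega
    simp [tsub_add_cancel_of_le hle]
  · rintro ⟨p, q⟩ hpq
    simp
  · rintro ⟨p, q⟩ hpq
    simp only [Finset.mem_filter, Finset.HasAntidiagonal.mem_antidiagonal] at hpq
    have hle : e1 ≤ p := by rw [Finsupp.single_le_iff]; omega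
    have hp : p - e1 + e1 = p := tsub_add_cancel_of_le hle
    have : ((p - e1) 1 : ℚ) + 1 = (p 1 : ℚ) := by
      have := DFunLike.congr_fun hp 1
      simp only [Finsupp.add_apply] at this
      push_cast [← this]
      simp [e1]
    rw [hp, this]
lemma Dz_mul (f g : MvPowerSeries (Fin 2) ℚ) :
    Dz (f * g) = Dz f * g + f * Dz g := by
  ext d
  rw [map_add, coeff_Dz, coeff_mul, coeff_mul, coeff_mul, Finset.mul_sum]
  have key : ∀ pq ∈ Finset.HasAntidiagonal.antidiagonal (d + e1),
      (d 1 + 1 : ℚ) * (coeff pq.1 f * coeff pq.2 g)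
        = (pq.1 1 : ℚ) * (coeff pq.1 f * coeff pq.2 g)
          + (pq.2 1 : ℚ) * (coeff pq.1 f * coeff pq.2 g) := by
    rintro ⟨p, q⟩ hpq
    rw [Finset.HasAntidiagonal.mem_antidiagonal] at hpq
    have := DFunLike.congr_fun hpq 1
    simp only [Finsupp.add_apply] at this
    have h1 : (p 1 : ℚ) + (q 1 : ℚ) = (d 1 : ℚ) + 1 := by
      have h2 : p 1 + q 1 = d 1 + 1 := by simpa [e1] using this
      exact_mod_cast h2
    rw [← add_mul, h1]
  rw [Finset.sum_congr rfl key, Finset.sum_add_distrib]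
  congr 1
  · rw [sum_shift (fun p q => coeff p f * coeff q g) d]
    exact Finset.sum_congr rfl (fun pq _ => by rw [coeff_Dz, mul_assoc])
  · rw [Finsupp.sum_antidiagonal_swap (d + e1) (fun p q => (q 1 : ℚ) * (coeff p f * coeff q g))]
    have : ∀ pq ∈ Finset.HasAntidiagonal.antidiagonal (d + e1),
        (pq.1 1 : ℚ) * (coeff pq.2 f * coeff pq.1 g)
          = (pq.1 1 : ℚ) * (coeff pq.1 g * coeff pq.2 f) := by
      intro pq _; ring
    rw [Finset.sum_congr rfl this,
      sum_shift (fun p q => coeff p g * coeff q f) d,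
      Finsupp.sum_antidiagonal_swap d
        (fun p q => ((p 1 : ℚ) + 1) * (coeff (p + e1) g * coeff q f))]
    refine Finset.sum_congr rfl (fun pq _ => ?_)
    rw [coeff_Dz]; ring

lemma Dz_one : Dz (1 : MvPowerSeries (Fin 2) ℚ) = 0 := by
  ext d
  rw [coeff_Dz, coeff_one, if_neg, mul_zero, map_zero]
  intro h
  have := DFunLike.congr_fun h 1
  simp [e1] at this

lemma Dz_pow (f : MvPowerSeries (Fin 2) ℚ) (k : ℕ) :
    Dz (f ^ (k + 1)) = (k + 1) • (f ^ k * Dz f) := by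
  induction k with
  | zero => simp
  | succ k ih =>
    rw [pow_succ, Dz_mul, ih, smul_mul_assoc, mul_right_comm (f ^ k) (Dz f) f,
      ← pow_succ, ← succ_nsmul]

lemma coeff_expOf (f : MvPowerSeries (Fin 2) ℚ) (hf : constantCoeff f = 0)
    {d : Fin 2 →₀ ℕ} {N : ℕ} (hN : d 0 + d 1 + 1 ≤ N) :
    coeff d (expOf f) = ∑ k ∈ Finset.range N, coeff d (f ^ k) / (k.factorial : ℚ) := by
  rw [coeff_apply]
  show ∑ k ∈ Finset.range (d 0 + d 1 + 1), coeff d (f ^ k) / (k.factorial : ℚ) = _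
  refine Finset.sum_subset (Finset.range_subset_range.mpr hN) (fun k _ hk => ?_)
  rw [Finset.mem_range, not_lt] at hk
  rw [coeff_pow_eq_zero hf (by omega), zero_div]

lemma coeff_expOf_mul (f g : MvPowerSeries (Fin 2) ℚ) (hf : constantCoeff f = 0)
    (d : Fin 2 →₀ ℕ) :
    coeff d (expOf f * g)
      = ∑ k ∈ Finset.range (d 0 + d 1 + 1), coeff d (f ^ k * g) / (k.factorial : ℚ) := by
  rw [coeff_mul]
  have step : ∀ pq ∈ Finset.HasAntidiagonal.antidiagonal d,
      coeff pq.1 (expOf f) * coeff pq.2 g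
        = ∑ k ∈ Finset.range (d 0 + d 1 + 1),
            (coeff pq.1 (f ^ k) * coeff pq.2 g) / (k.factorial : ℚ) := by
    rintro ⟨p, q⟩ hpq
    rw [Finset.HasAntidiagonal.mem_antidiagonal] at hpq
    have hp : p 0 + p 1 + 1 ≤ d 0 + d 1 + 1 := by
      have h0 := DFunLike.congr_fun hpq 0
      have h1 := DFunLike.congr_fun hpq 1
      simp only [Finsupp.add_apply] at h0 h1
      omega
    rw [coeff_expOf f hf hp, Finset.sum_mul]
    exact Finset.sum_congr rfl (fun k _ => by ring)
  rw [Finset.sum_congr rfl step, Finset.sum_comm]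
  refine Finset.sum_congr rfl (fun k _ => ?_)
  rw [coeff_mul, Finset.sum_div]

lemma Dz_expOf (f : MvPowerSeries (Fin 2) ℚ) (hf : constantCoeff f = 0) :
    Dz (expOf f) = expOf f * Dz f := by
  ext d
  rw [coeff_Dz, coeff_expOf_mul f (Dz f) hf d]
  have hde : (d + e1) 0 + (d + e1) 1 + 1 ≤ d 0 + d 1 + 2 := by simp [e1]; omega
  rw [coeff_expOf f hf hde]
  rw [Finset.mul_sum, Finset.sum_range_succ' _ (d 0 + d 1 + 1)]
  have hzero : (d 1 + 1 : ℚ) * (coeff (d + e1) (f ^ 0) / (Nat.factorial 0 : ℚ)) = 0 := by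
    rw [pow_zero, coeff_one, if_neg, zero_div, mul_zero]
    intro h
    have := DFunLike.congr_fun h 1
    simp [e1] at this
  rw [hzero, add_zero]
  refine Finset.sum_congr rfl (fun k _ => ?_)
  have : (d 1 + 1 : ℚ) * coeff (d + e1) (f ^ (k + 1)) = coeff d (Dz (f ^ (k + 1))) := rfl
  rw [← mul_div_assoc, this, Dz_pow, map_nsmul, nsmul_eq_mul, Nat.factorial_succ]
  have hk : ((k + 1 : ℕ) : ℚ) ≠ 0 := by positivity
  have hfac : ((k.factorial : ℕ) : ℚ) ≠ 0 := by exact_mod_cast k.factorial_ne_zero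
  push_cast
  field_simp

@[simp] lemma u1_apply0 (m : ℕ) : u1 m 0 = m := by simp
@[simp] lemma u1_apply1 (m : ℕ) : u1 m 1 = 0 := by simp [Finsupp.single_apply]

lemma eq_u1_of (d : Fin 2 →₀ ℕ) (h : d 1 = 0) : d = u1 (d 0) := by
  ext i
  fin_cases i
  · simp
  · simp [Finsupp.single_apply, h]

/-- Coefficient of a product at a pure-`u` monomial. -/
lemma coeff_single_mul (f g : MvPowerSeries (Fin 2) ℚ) (m : ℕ) :
    coeff (u1 m) (f * g)
      = ∑ i ∈ Finset.range (m + 1), coeff (u1 i) f * coeff (u1 (m - i)) g := by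
  rw [coeff_mul, Finsupp.antidiagonal_single, Finset.sum_map,
    ← Finset.Nat.sum_antidiagonal_eq_sum_range_succ
      (f := fun i j => coeff (u1 i) f * coeff (u1 j) g)]
  rfl

def UOnly (f : MvPowerSeries (Fin 2) ℚ) : Prop := ∀ d : Fin 2 →₀ ℕ, d 1 ≠ 0 → coeff d f = 0

lemma UOnly.mul {f g : MvPowerSeries (Fin 2) ℚ} (hf : UOnly f) (hg : UOnly g) :
    UOnly (f * g) := by
  intro d hd
  rw [coeff_mul]
  refine Finset.sum_eq_zero (fun pq hpq => ?_)
  rw [Finset.HasAntidiagonal.mem_antidiagonal] at hpq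
  have h1 : pq.1 1 + pq.2 1 = d 1 := by
    have := DFunLike.congr_fun hpq 1; simpa using this
  rcases Nat.eq_zero_or_pos (pq.1 1) with h | h
  · rw [hg pq.2 (by omega), mul_zero]
  · rw [hf pq.1 (by omega), zero_mul]

lemma UOnly.one : UOnly (1 : MvPowerSeries (Fin 2) ℚ) := by
  intro d hd
  rw [coeff_one, if_neg]
  intro h; rw [h] at hd; simp at hd

lemma UOnly.pow {f : MvPowerSeries (Fin 2) ℚ} (hf : UOnly f) (k : ℕ) : UOnly (f ^ k) := by
  induction k with
  | zero => simpa using UOnly.one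
  | succ k ih => rw [pow_succ]; exact ih.mul hf

/-- Coefficient of `f * g` with `f` a `u`-only series. -/
lemma coeff_uOnly_mul {f : MvPowerSeries (Fin 2) ℚ} (hf : UOnly f)
    (g : MvPowerSeries (Fin 2) ℚ) (d : Fin 2 →₀ ℕ) :
    coeff d (f * g)
      = ∑ i ∈ Finset.range (d 0 + 1), coeff (u1 i) f * coeff (d - u1 i) g := by
  rw [coeff_mul]
  have h1 : ∑ pq ∈ Finset.HasAntidiagonal.antidiagonal d, coeff pq.1 f * coeff pq.2 g
      = ∑ pq ∈ (Finset.HasAntidiagonal.antidiagonal d).filter (fun pq => pq.1 1 = 0),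
          coeff pq.1 f * coeff pq.2 g := by
    refine (Finset.sum_subset (Finset.filter_subset _ _) (fun pq hpq h => ?_)).symm
    simp only [Finset.mem_filter, hpq, true_and] at h
    rw [hf pq.1 h, zero_mul]
  rw [h1]
  refine Finset.sum_bij' (fun pq _ => pq.1 0) (fun i _ => (u1 i, d - u1 i)) ?_ ?_ ?_ ?_ ?_
  · rintro ⟨p, q⟩ hpq
    simp only [Finset.mem_filter, Finset.HasAntidiagonal.mem_antidiagonal] at hpq
    obtain ⟨hsum, h0⟩ := hpq
    have := DFunLike.congr_fun hsum 0
    simp only [Finsupp.add_apply] at this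
    simp only [Finset.mem_range]
    omega
  · intro i hi
    simp only [Finset.mem_range] at hi
    have hle : u1 i ≤ d := by rw [Finsupp.single_le_iff]; omega
    simp only [Finset.mem_filter, Finset.HasAntidiagonal.mem_antidiagonal]
    exact ⟨add_tsub_cancel_of_le hle, by simp⟩
  · rintro ⟨p, q⟩ hpq
    simp only [Finset.mem_filter, Finset.HasAntidiagonal.mem_antidiagonal] at hpq
    obtain ⟨hsum, h0⟩ := hpq
    have hp : p = u1 (p 0) := eq_u1_of p h0
    have hq : q = d - u1 (p 0) := by
      rw [← hp, eq_tsub_iff_add_eq_of_le, add_comm]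
      · exact hsum
      · rw [← hsum]; exact le_add_self.trans (le_of_eq (add_comm q p)) |>.trans (le_refl _)
    simp only [Prod.mk.injEq]
    exact ⟨hp.symm, hq.symm⟩
  · intro i hi; simp
  · rintro ⟨p, q⟩ hpq
    simp only [Finset.mem_filter, Finset.HasAntidiagonal.mem_antidiagonal] at hpq
    obtain ⟨hsum, h0⟩ := hpq
    have hp : p = u1 (p 0) := eq_u1_of p h0
    have hq : q = d - u1 (p 0) := by
      rw [← hp]
      have : p ≤ d := by rw [← hsum]; exact le_add_self.trans (le_of_eq (add_comm q p))
      rw [eq_tsub_iff_add_eq_of_le this, add_comm]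
      exact hsum
    rw [← hp] at hq
    simp only []
    rw [← hp, ← hq]

lemma uOnly_CatU : UOnly CatU := by
  intro d hd
  rw [coeff_apply]
  unfold CatU
  rw [if_neg hd]

lemma coeff_CatU (n : ℕ) : coeff (u1 n) CatU = (catalan n : ℚ) := by
  rw [coeff_apply]
  unfold CatU
  rw [if_pos (u1_apply1 n), u1_apply0]
  have h := succ_mul_catalan_eq_centralBinom n
  have : ((2 * n).choose n : ℚ) = (n + 1) * (catalan n : ℚ) := by
    rw [← Nat.centralBinom]
    exact_mod_cast h.symm
  rw [this]
  field_simp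

lemma cat_eq : CatU = 1 + X 0 * (CatU * CatU) := by
  ext d
  rw [map_add, show (X 0 : MvPowerSeries (Fin 2) ℚ) = monomial e0 1 from rfl,
    coeff_monomial_mul]
  by_cases hd : d 1 = 0
  · have hdu : d = u1 (d 0) := by
      ext i; fin_cases i <;> simp [Finsupp.single_apply, hd]
    rw [hdu]
    rcases Nat.eq_zero_or_pos (d 0) with h0 | h0
    · rw [h0]
      have hne : ¬ (e0 ≤ u1 0) := by
        rw [Finsupp.single_le_iff]; simp
      rw [if_neg hne, add_zero, coeff_CatU, coeff_one, if_pos (by simp), catalan_zero, Nat.cast_one]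
    · obtain ⟨m, hm⟩ := Nat.exists_eq_add_of_lt h0
      rw [zero_add] at hm
      rw [hm]
      have hle : e0 ≤ u1 (m + 1) := by rw [Finsupp.single_le_iff]; simp
      rw [if_pos hle, coeff_one, if_neg (by simp [Finsupp.single_eq_zero]), zero_add, one_mul]
      have hsub : u1 (m + 1) - e0 = u1 m := by
        ext i; fin_cases i <;> simp [Finsupp.single_apply]
      rw [hsub, coeff_single_mul, coeff_CatU]
      have heq : ∀ i ∈ Finset.range (m + 1),
          coeff (u1 i) CatU * coeff (u1 (m - i)) CatU
            = ((catalan i * catalan (m - i) : ℕ) : ℚ) := by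
        intro i _
        rw [coeff_CatU, coeff_CatU]; push_cast; ring
      rw [Finset.sum_congr rfl heq, ← Nat.cast_sum, catalan_succ']
      congr 1
      rw [Finset.Nat.sum_antidiagonal_eq_sum_range_succ (f := fun x y => catalan x * catalan y)]
  · rw [uOnly_CatU d hd, coeff_one, if_neg (by intro h; rw [h] at hd; simp at hd), zero_add]
    have h2 : (d - e0) 1 = d 1 := by
      rw [Finsupp.tsub_apply]
      simp [Finsupp.single_apply]
    split_ifs with hle
    · rw [(uOnly_CatU.mul uOnly_CatU) (d - e0) (by rw [h2]; exact hd), mul_zero]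
    · rfl

noncomputable def bal (m k : ℕ) : ℚ :=
  if k = 0 then (if m = 0 then 1 else 0)
  else (k : ℚ) / (2 * m + k) * ((2 * m + k).choose m : ℚ)

lemma bal_zero (k : ℕ) : bal 0 k = 1 := by
  unfold bal
  rcases Nat.eq_zero_or_pos k with h | h
  · simp [h]
  · rw [if_neg (by omega)]
    simp only [Nat.cast_zero, mul_zero, zero_add, Nat.choose_zero_right, Nat.cast_one, mul_one]
    exact div_self (Nat.cast_ne_zero.mpr (by omega))

lemma bal_succ_zero (m : ℕ) : bal (m + 1) 0 = 0 := by simp [bal]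

lemma key_choose (i j : ℕ) :
    ((j : ℚ) + 1) / ((2 * i + j : ℚ) + 3) * (((2 * i + j + 3).choose (i + 1) : ℕ) : ℚ)
      = (j : ℚ) / ((2 * i + j : ℚ) + 2) * (((2 * i + j + 2).choose (i + 1) : ℕ) : ℚ)
        + ((j : ℚ) + 2) / ((2 * i + j : ℚ) + 2) * (((2 * i + j + 2).choose i : ℕ) : ℚ) := by
  have hpascal : (2 * i + j + 3).choose (i + 1)
      = (2 * i + j + 2).choose i + (2 * i + j + 2).choose (i + 1) := by
    rw [show 2 * i + j + 3 = (2 * i + j + 2) + 1 from rfl]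
    exact Nat.choose_succ_succ _ _
  have hratio : (2 * i + j + 2).choose (i + 1) * (i + 1)
      = (2 * i + j + 2).choose i * (i + j + 2) := by
    have := Nat.choose_succ_right_eq (2 * i + j + 2) i
    rwa [show 2 * i + j + 2 - i = i + j + 2 by omega] at this
  have ha : ((2 * i + j + 2).choose (i + 1) : ℚ) * ((i : ℚ) + 1)
      = ((2 * i + j + 2).choose i : ℚ) * ((i : ℚ) + (j : ℚ) + 2) := by exact_mod_cast hratio
  have h0 : ((2 * i + j : ℚ) + 2) ≠ 0 := by positivity
  have h1 : ((2 * i + j : ℚ) + 3) ≠ 0 := by positivity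
  rw [hpascal]
  push_cast
  generalize hA : (((2 * i + j + 2).choose (i + 1) : ℕ) : ℚ) = a at ha ⊢
  generalize hB : (((2 * i + j + 2).choose i : ℕ) : ℚ) = b at ha ⊢
  field_simp
  linear_combination (2 : ℚ) * ha

lemma bal_rec (i j : ℕ) : bal (i + 1) (j + 1) = bal (i + 1) j + bal i (j + 2) := by
  have h1 : bal (i + 1) (j + 1)
      = ((j : ℚ) + 1) / ((2 * i + j : ℚ) + 3) * (((2 * i + j + 3).choose (i + 1) : ℕ) : ℚ) := by
    unfold bal
    rw [if_neg (by omega), show 2 * (i + 1) + (j + 1) = 2 * i + j + 3 from by omega]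
    push_cast
    ring
  have h3 : bal i (j + 2)
      = ((j : ℚ) + 2) / ((2 * i + j : ℚ) + 2) * (((2 * i + j + 2).choose i : ℕ) : ℚ) := by
    unfold bal
    rw [if_neg (by omega), show 2 * i + (j + 2) = 2 * i + j + 2 from by omega]
    push_cast
    ring
  have h2 : bal (i + 1) j
      = (j : ℚ) / ((2 * i + j : ℚ) + 2) * (((2 * i + j + 2).choose (i + 1) : ℕ) : ℚ) := by
    rcases Nat.eq_zero_or_pos j with h | h
    · subst h; rw [bal_succ_zero]; simp
    · unfold bal
      rw [if_neg (by omega), show 2 * (i + 1) + j = 2 * i + j + 2 from by omega]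
      push_cast
      ring
  rw [h1, h2, h3, key_choose]

lemma coeff_catPow_aux (N : ℕ) : ∀ m k : ℕ, 2 * m + k ≤ N →
    coeff (u1 m) (CatU ^ k) = bal m k := by
  induction N with
  | zero =>
    intro m k h
    obtain ⟨rfl, rfl⟩ : m = 0 ∧ k = 0 := by omega
    rw [pow_zero, coeff_one, if_pos (by simp), bal_zero]
  | succ N ih =>
    intro m k h
    rcases k with _ | j
    · rw [pow_zero, coeff_one, bal, if_pos rfl]
      by_cases hm : m = 0
      · rw [if_pos (by simp [hm]), if_pos hm]
      · rw [if_neg (by simp [Finsupp.single_eq_zero, hm]), if_neg hm]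
    · have hsplit : CatU ^ (j + 1) = CatU ^ j + X 0 * CatU ^ (j + 2) := by
        have hstep : CatU ^ j * CatU = CatU ^ j * (1 + X 0 * (CatU * CatU)) := by
          rw [← cat_eq]
        rw [pow_succ, hstep]
        ring
      rw [hsplit, map_add]
      rw [show (X 0 : MvPowerSeries (Fin 2) ℚ) = monomial e0 1 from rfl, coeff_monomial_mul,
        one_mul]
      rcases m with _ | i
      · rw [if_neg (by rw [Finsupp.single_le_iff]; simp), add_zero,
          ih 0 j (by omega), bal_zero, bal_zero]
      · have hle : e0 ≤ u1 (i + 1) := by rw [Finsupp.single_le_iff]; simp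
        have hsub : u1 (i + 1) - e0 = u1 i := by
          ext x; fin_cases x <;> simp [Finsupp.single_apply]
        rw [if_pos hle, hsub, ih (i + 1) j (by omega), ih i (j + 2) (by omega), bal_rec]

lemma coeff_catPow (m k : ℕ) : coeff (u1 m) (CatU ^ k) = bal m k :=
  coeff_catPow_aux (2 * m + k) m k le_rfl


lemma constantCoeff_A : constantCoeff A = 0 := by
  rw [← coeff_zero_eq_constantCoeff, coeff_apply]
  unfold A
  simp

lemma coeff_A_u1 (l : ℕ) : coeff (u1 l) A = 0 := by
  rw [coeff_apply]
  unfold A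
  rw [if_neg]
  simp [Finsupp.single_apply]

lemma bal_one (m : ℕ) : bal m 1 = (catalan m : ℚ) := by
  rw [← coeff_catPow, pow_one, coeff_CatU]

lemma coeff_DzA (d : Fin 2 →₀ ℕ) :
    coeff d (Dz A) = if d 1 + 1 ≤ d 0 then bal (d 0 - d 1 - 1) (d 1 + 1) else 0 := by
  rw [coeff_Dz, coeff_apply]
  unfold A
  have h0 : (d + e1) 0 = d 0 := by simp [Finsupp.single_apply]
  have h1 : (d + e1) 1 = d 1 + 1 := by simp
  rw [h0, h1]
  generalize d 0 = a
  generalize d 1 = b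
  by_cases h : b + 1 ≤ a
  · rw [if_pos ⟨by omega, h⟩, if_pos h]
    obtain ⟨n, rfl⟩ : ∃ n, a = n + 1 := ⟨a - 1, by omega⟩
    have hbn : b ≤ n := by omega
    rw [show n + 1 - 1 = n from rfl, show b + 1 - 1 = b from rfl,
      show n + 1 - b - 1 = n - b from by omega]
    rw [bal, if_neg (by omega), show 2 * (n - b) + (b + 1) = 2 * n - b + 1 from by omega]
    have hsymm : (2 * n - b + 1).choose (n - b) = (2 * n - b + 1).choose (n + 1) := by
      rw [show n - b = (2 * n - b + 1) - (n + 1) from by omega]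
      exact Nat.choose_symm (by omega)
    have hmul : (2 * n - b + 1) * (2 * n - b).choose n = (2 * n - b + 1).choose (n + 1) * (n + 1) :=
      Nat.add_one_mul_choose_eq (2 * n - b) n
    have hmulq : ((2 * n : ℚ) - b + 1) * (((2 * n - b).choose n : ℕ) : ℚ)
        = (((2 * n - b + 1).choose (n + 1) : ℕ) : ℚ) * ((n : ℚ) + 1) := by
      have hb2n : b ≤ 2 * n := by omega
      exact_mod_cast hmul
    rw [hsymm]
    have hc1 : ((n - b : ℕ) : ℚ) = (n : ℚ) - b := by
      push_cast [hbn]; ring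
    rw [hc1]
    have hden : (0 : ℚ) < 2 * ((n : ℚ) - b) + (b + 1) := by
      have : (b : ℚ) ≤ n := by exact_mod_cast hbn
      linarith
    have hn1 : ((n : ℚ) + 1) ≠ 0 := by positivity
    push_cast
    field_simp
    linear_combination hmulq
  · rw [if_neg (show ¬ (1 ≤ b + 1 ∧ b + 1 ≤ a) from by omega), mul_zero, if_neg h]

lemma pointwise (d : Fin 2 →₀ ℕ) (i : ℕ) (hi : i ≤ d 0) :
    coeff (d - u1 i) (X 1 * (X 0 * Dz A))
      = if 1 ≤ d 1 ∧ i + d 1 + 1 ≤ d 0 then bal (d 0 - i - d 1 - 1) (d 1) else 0 := by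
  rw [show (X 1 : MvPowerSeries (Fin 2) ℚ) = monomial e1 1 from rfl, coeff_monomial_mul, one_mul]
  by_cases hb : 1 ≤ d 1
  · have hle1 : e1 ≤ d - u1 i := by
      rw [Finsupp.single_le_iff, Finsupp.tsub_apply]
      simp [Finsupp.single_apply]
      omega
    rw [if_pos hle1,
      show (X 0 : MvPowerSeries (Fin 2) ℚ) = monomial e0 1 from rfl, coeff_monomial_mul, one_mul]
    by_cases ha : i + 1 ≤ d 0
    · have hle0 : e0 ≤ d - u1 i - e1 := by
        rw [Finsupp.single_le_iff, Finsupp.tsub_apply, Finsupp.tsub_apply]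
        simp [Finsupp.single_apply]
        omega
      rw [if_pos hle0, coeff_DzA]
      have h0 : (d - u1 i - e1 - e0) 0 = d 0 - i - 1 := by
        simp [Finsupp.tsub_apply, Finsupp.single_apply]
      have h1 : (d - u1 i - e1 - e0) 1 = d 1 - 1 := by
        simp [Finsupp.tsub_apply, Finsupp.single_apply]
      rw [h0, h1]
      by_cases hc : d 1 - 1 + 1 ≤ d 0 - i - 1
      · rw [if_pos hc, if_pos (by omega)]
        congr 1
        · omega
        · omega
      · rw [if_neg hc, if_neg (by omega)]
    · have hle0 : ¬ (e0 ≤ d - u1 i - e1) := by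
        rw [Finsupp.single_le_iff, Finsupp.tsub_apply, Finsupp.tsub_apply]
        simp [Finsupp.single_apply]
        omega
      rw [if_neg hle0, if_neg (by omega)]
  · have hle1 : ¬ (e1 ≤ d - u1 i) := by
      rw [Finsupp.single_le_iff, Finsupp.tsub_apply]
      simp [Finsupp.single_apply]
      omega
    rw [if_neg hle1, if_neg (by omega)]

lemma conv_bal (a s : ℕ) (h : s + 2 ≤ a) :
    bal (a - s - 2) (s + 2)
      = ∑ i ∈ Finset.range (a - s - 1), (catalan i : ℚ) * bal (a - s - 2 - i) (s + 1) := by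
  rw [← coeff_catPow, pow_succ', coeff_single_mul,
    show a - s - 2 + 1 = a - s - 1 from by omega]
  refine Finset.sum_congr rfl (fun i hi => ?_)
  rw [coeff_CatU, coeff_catPow]

lemma keyA : Dz A = X 0 * CatU + CatU * (X 1 * (X 0 * Dz A)) := by
  ext d
  have hsum : ∀ i ∈ Finset.range (d 0 + 1),
      coeff (u1 i) CatU * coeff (d - u1 i) (X 1 * (X 0 * Dz A))
        = (catalan i : ℚ) *
            (if 1 ≤ d 1 ∧ i + d 1 + 1 ≤ d 0 then bal (d 0 - i - d 1 - 1) (d 1) else 0) := by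
    intro i hi
    rw [Finset.mem_range] at hi
    rw [coeff_CatU, pointwise d i (by omega)]
  rw [map_add, coeff_DzA, coeff_uOnly_mul uOnly_CatU, Finset.sum_congr rfl hsum,
    show (X 0 : MvPowerSeries (Fin 2) ℚ) = monomial e0 1 from rfl, coeff_monomial_mul, one_mul]
  rcases Nat.eq_zero_or_pos (d 1) with hb | hb
  · rw [hb]
    have hz : ∀ i ∈ Finset.range (d 0 + 1),
        (catalan i : ℚ) * (if 1 ≤ 0 ∧ i + 0 + 1 ≤ d 0 then bal (d 0 - i - 0 - 1) 0 else 0) = 0 := by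
      intro i _
      rw [if_neg (by omega), mul_zero]
    rw [Finset.sum_eq_zero hz, add_zero]
    by_cases ha : 1 ≤ d 0
    · have hle : e0 ≤ d := by rw [Finsupp.single_le_iff]; omega
      rw [if_pos (by omega), if_pos hle]
      have hde : d - e0 = u1 (d 0 - 1) := by
        ext x
        fin_cases x <;> simp [Finsupp.tsub_apply, Finsupp.single_apply] <;> omega
      rw [hde, coeff_CatU, show d 0 - 0 - 1 = d 0 - 1 from by omega, bal_one]
    · rw [if_neg (by omega), if_neg (by rw [Finsupp.single_le_iff]; omega)]
  · obtain ⟨s, hs⟩ : ∃ s, d 1 = s + 1 := ⟨d 1 - 1, by omega⟩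
    have hT1 : (if e0 ≤ d then coeff (d - e0) CatU else 0) = 0 := by
      split_ifs with hle
      · exact uOnly_CatU (d - e0) (by
          rw [Finsupp.tsub_apply]
          simp [Finsupp.single_apply]
          omega)
      · rfl
    rw [hT1, zero_add, hs]
    by_cases ha : s + 2 ≤ d 0
    · rw [if_pos (show s + 1 + 1 ≤ d 0 from by omega),
        show d 0 - (s + 1) - 1 = d 0 - s - 2 from by omega, conv_bal (d 0) s ha,
        ← Finset.sum_subset (Finset.range_subset_range.mpr (show d 0 - s - 1 ≤ d 0 + 1 from by omega))
          (fun i _ hni => by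
            rw [Finset.mem_range, not_lt] at hni
            rw [if_neg (by omega), mul_zero])]
      refine Finset.sum_congr rfl (fun i hi => ?_)
      rw [Finset.mem_range] at hi
      rw [if_pos (by omega), show d 0 - i - (s + 1) - 1 = d 0 - s - 2 - i from by omega]
    · rw [if_neg (by omega)]
      refine (Finset.sum_eq_zero (fun i _ => ?_)).symm
      rw [if_neg (by omega), mul_zero]

lemma Dz_sub (f g : MvPowerSeries (Fin 2) ℚ) : Dz (f - g) = Dz f - Dz g := by
  ext d
  rw [coeff_Dz, map_sub, map_sub, coeff_Dz, coeff_Dz, mul_sub]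

lemma Dz_CatU : Dz CatU = 0 := by
  ext d
  rw [coeff_Dz, coeff_apply, map_zero]
  unfold CatU
  rw [if_neg (by simp), mul_zero]


lemma coeff_expA_u1 (i : ℕ) : coeff (u1 i) (expOf A) = if i = 0 then 1 else 0 := by
  have hApow : ∀ k, coeff (u1 i) (A ^ (k + 1)) = 0 := by
    intro k
    rw [pow_succ', coeff_single_mul]
    exact Finset.sum_eq_zero (fun j _ => by rw [coeff_A_u1, zero_mul])
  have hexp : coeff (u1 i) (expOf A)
      = ∑ k ∈ Finset.range ((u1 i) 0 + (u1 i) 1 + 1), coeff (u1 i) (A ^ k) / (k.factorial : ℚ) :=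
    rfl
  rw [hexp]
  rw [Finset.sum_eq_single_of_mem 0 (by simp)]
  · rw [pow_zero, coeff_one, Nat.factorial_zero, Nat.cast_one, div_one]
    by_cases hi : i = 0
    · rw [if_pos (by simp [hi]), if_pos hi]
    · rw [if_neg (by simp [Finsupp.single_eq_zero, hi]), if_neg hi]
  · intro k _ hk
    obtain ⟨k', rfl⟩ : ∃ k', k = k' + 1 := ⟨k - 1, by omega⟩
    rw [hApow, zero_div]

lemma coeff_B_u1 (m : ℕ) : coeff (u1 m) (X 1 * X 0 * CatU) = 0 := by
  rw [mul_assoc, show (X 1 : MvPowerSeries (Fin 2) ℚ) = monomial e1 1 from rfl,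
    coeff_monomial_mul, if_neg]
  rw [Finsupp.single_le_iff]
  simp [Finsupp.single_apply]


end ExpAProof

open ExpAProof in
theorem expA_mul_eq_one :
    expOf A * (1 - MvPowerSeries.X 1 * MvPowerSeries.X 0 * CatU) = 1 := by
  have hDzB : Dz (X 1 * X 0 * CatU) = X 0 * CatU := by
    rw [mul_assoc, Dz_mul, Dz_X1, Dz_mul, Dz_X0, Dz_CatU, mul_zero, zero_mul]
    ring
  have hkey2 : Dz A * (1 - X 1 * X 0 * CatU) = X 0 * CatU := by
    have h := keyA
    linear_combination h
  have hG : Dz (expOf A * (1 - X 1 * X 0 * CatU)) = 0 := by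
    rw [Dz_mul, Dz_expOf A constantCoeff_A, Dz_sub, Dz_one, hDzB, zero_sub, mul_assoc, hkey2]
    ring
  have hz : ∀ n : ℕ, coeff (u1 n) (expOf A * (1 - X 1 * X 0 * CatU))
      = if n = 0 then 1 else 0 := by
    intro n
    rw [coeff_single_mul]
    rw [Finset.sum_eq_single_of_mem 0 (by simp)]
    · rw [coeff_expA_u1, if_pos rfl, one_mul, Nat.sub_zero, map_sub, coeff_B_u1, sub_zero,
        coeff_one]
      by_cases hn : n = 0
      · rw [if_pos (by simp [hn]), if_pos hn]
      · rw [if_neg (by simp [Finsupp.single_eq_zero, hn]), if_neg hn]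
    · intro i _ hi
      rw [coeff_expA_u1, if_neg hi, zero_mul]
  ext d
  rcases Nat.eq_zero_or_pos (d 1) with hd | hd
  · have hdu : d = u1 (d 0) := by
      ext x; fin_cases x <;> simp [Finsupp.single_apply, hd]
    rw [hdu, hz, coeff_one]
    by_cases h0 : d 0 = 0
    · rw [if_pos h0, if_pos (by simp [h0])]
    · rw [if_neg h0, if_neg (by simp [Finsupp.single_eq_zero, h0])]
  · have h1 : coeff (d - e1) (Dz (expOf A * (1 - X 1 * X 0 * CatU))) = 0 := by
      rw [hG, map_zero]
    rw [coeff_Dz] at h1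
    have he1 : d - e1 + e1 = d := by
      apply tsub_add_cancel_of_le
      rw [Finsupp.single_le_iff]; omega
    rw [he1] at h1
    have h2 : coeff d (expOf A * (1 - X 1 * X 0 * CatU)) = 0 := by
      have hne : (((d - e1) 1 : ℚ) + 1) ≠ 0 := by positivity
      exact (mul_eq_zero.mp h1).resolve_left hne
    rw [h2, coeff_one, if_neg]
    intro h
    rw [h] at hd
    simp at hd
end

section
/- In ℚ[[u,z]], the identity A(u,z) = log(1/(1 − z·u·Cat(u))) = ∑_{j≥0} (z^{j+1}/(j+1))·(u·Cat(u))^{j+1} holds, where A(u,z) = ∑_{n≥0} ∑_{j=0}^{n} (1/(n+1))·C(2n−j,n)·z^{j+1}·u^{n+1}. -/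
open MvPowerSeries

/-- The Catalan series `Cat(u) = ∑_{n≥0} (1/(n+1))·C(2n,n)·u^n` in one variable. -/
noncomputable def Cat : PowerSeries ℚ :=
  PowerSeries.mk fun n => ((2 * n).choose n : ℚ) / (n + 1)

open PowerSeries Finset

lemma coeff_Cat (n : ℕ) : PowerSeries.coeff n Cat = (catalan n : ℚ) := by
  rw [Cat, coeff_mk]
  have h := succ_mul_catalan_eq_centralBinom n
  have : ((2 * n).choose n : ℚ) = (n + 1) * catalan n := by
    rw [← Nat.centralBinom, ← h]; push_cast; ring
  rw [this]; field_simp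

lemma cat_eq : Cat = 1 + PowerSeries.X * Cat ^ 2 := by
  ext n
  cases n with
  | zero => simp [coeff_Cat]
  | succ n =>
    rw [map_add, coeff_Cat]
    simp only [pow_two, PowerSeries.coeff_succ_X_mul]
    rw [PowerSeries.coeff_mul]
    simp only [coeff_Cat]
    rw [catalan_succ']
    push_cast
    simp

lemma Y_eq : PowerSeries.X * Cat = PowerSeries.X + (PowerSeries.X * Cat) ^ 2 := by
  conv_lhs => rw [cat_eq]
  ring

/-- Ballot numbers, in closed form. -/
noncomputable def g (a b : ℕ) : ℚ :=
  if b = 0 then (if a = 0 then 1 else 0)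
  else if b ≤ a then
    (b : ℚ) * ((2*a - b - 1).factorial : ℚ) / (((a - b).factorial : ℚ) * (a.factorial : ℚ))
  else 0

lemma coeff_X_pow_mul_zero (f : PowerSeries ℚ) (a b : ℕ) (h : a < b) :
    PowerSeries.coeff a (PowerSeries.X ^ b * f) = 0 := by
  rw [PowerSeries.coeff_mul]
  apply Finset.sum_eq_zero
  intro p hp
  rw [Finset.HasAntidiagonal.mem_antidiagonal] at hp
  rw [PowerSeries.coeff_X_pow, if_neg (by omega)]
  simp

lemma g_one : ∀ a, 1 ≤ a → g a a = 1 := by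
  intro a ha
  obtain ⟨a', rfl⟩ : ∃ a', a = a' + 1 := ⟨a - 1, by omega⟩
  rw [g, if_neg (by omega), if_pos le_rfl]
  have h1 : 2 * (a' + 1) - (a' + 1) - 1 = a' := by omega
  have h2 : (a' + 1) - (a' + 1) = 0 := by omega
  rw [h1, h2, Nat.factorial_zero, Nat.factorial_succ]
  have := Nat.factorial_pos a'
  push_cast
  field_simp

/-- Recursion for ballot numbers. -/
lemma g_rec (a b : ℕ) (hb : 1 ≤ b) (hba : b ≤ a) :
    g a b = g (a-1) (b-1) + g a (b+1) := by
  rcases eq_or_lt_of_le hba with rfl | hlt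
  · -- b = a
    rw [g_one b hb]
    have h2 : g b (b+1) = 0 := by rw [g, if_neg (by omega), if_neg (by omega)]
    rcases Nat.eq_or_lt_of_le hb with h1 | h1
    · rw [← h1]; norm_num [g, h2, ← h1]
    · rw [h2, g_one (b-1) (by omega)]; ring
  · -- b < a
    obtain ⟨p, hp⟩ : ∃ p, a = b + p + 1 := ⟨a - b - 1, by omega⟩
    subst hp
    rcases Nat.eq_or_lt_of_le hb with h1 | h1
    · -- b = 1
      rw [← h1]
      rw [g, if_neg (by omega), if_pos (by omega)]
      rw [show g (1 + p + 1 - 1) (1-1) = 0 by rw [g, if_pos rfl, if_neg (by omega)]]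
      rw [g, if_neg (by omega), if_pos (by omega)]
      have e1 : 2*(1+p+1) - 1 - 1 = 2*p + 2 := by omega
      have e2 : (1+p+1) - 1 = p + 1 := by omega
      have e3 : 2*(1+p+1) - 2 - 1 = 2*p + 1 := by omega
      have e4 : (1+p+1) - 2 = p := by omega
      rw [e1, e2, e3, e4]
      rw [show (2*p+2).factorial = (2*p+2) * (2*p+1).factorial from Nat.factorial_succ _,
          show (p+1).factorial = (p+1) * p.factorial from Nat.factorial_succ _]
      have hf1 : ((2*p+1).factorial : ℚ) ≠ 0 := by positivity
      have hf2 : (p.factorial : ℚ) ≠ 0 := by positivity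
      have hf3 : (((1+p+1).factorial : ℕ) : ℚ) ≠ 0 := by positivity
      push_cast
      field_simp
      ring
    · -- 2 ≤ b < a
      rw [g, if_neg (by omega), if_pos (by omega)]
      rw [g, if_neg (by omega), if_pos (by omega)]
      rw [g, if_neg (by omega), if_pos (by omega)]
      have e1 : 2*(b+p+1) - b - 1 = b + 2*p + 1 := by omega
      have e2 : (b+p+1) - b = p + 1 := by omega
      have e3 : 2*((b+p+1)-1) - (b-1) - 1 = b + 2*p := by omega
      have e4 : ((b+p+1)-1) - (b-1) = p + 1 := by omega
      have e5 : 2*(b+p+1) - (b+1) - 1 = b + 2*p := by omega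
      have e6 : (b+p+1) - (b+1) = p := by omega
      have e7 : (b+p+1) - 1 = b + p := by omega
      rw [e1, e2, e3, e4, e5, e6, e7]
      rw [show (b+2*p+1).factorial = (b+2*p+1) * (b+2*p).factorial from Nat.factorial_succ _,
          show (p+1).factorial = (p+1) * p.factorial from Nat.factorial_succ _,
          show (b+p+1).factorial = (b+p+1) * (b+p).factorial from Nat.factorial_succ _]
      have hf1 : ((b+2*p).factorial : ℚ) ≠ 0 := by positivity
      have hf2 : (p.factorial : ℚ) ≠ 0 := by positivity
      have hf3 : ((b+p).factorial : ℚ) ≠ 0 := by positivity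
      have hc : ((b - 1 : ℕ) : ℚ) = (b : ℚ) - 1 := by
        push_cast [Nat.cast_sub hb]; ring
      rw [hc]
      push_cast
      field_simp
      ring

lemma coeff_Y_pow : ∀ m a b, 2*a - b ≤ m →
    PowerSeries.coeff a ((PowerSeries.X * Cat) ^ b) = g a b := by
  intro m
  induction m with
  | zero =>
    intro a b h
    rcases Nat.eq_zero_or_pos b with rfl | hb
    · have ha : a = 0 := by omega
      subst ha
      simp [g]
    · -- b ≥ 1 and 2a ≤ b; if a < b trivial, else a ≥ b and 2a ≤ b forces a = 0, b ≤ 0, contra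
      have hab : a < b := by omega
      rw [mul_pow, coeff_X_pow_mul_zero _ _ _ hab, g, if_neg (by omega), if_neg (by omega)]
  | succ m ih =>
    intro a b h
    rcases Nat.lt_or_ge a b with hab | hab
    · rw [mul_pow, coeff_X_pow_mul_zero _ _ _ hab, g]
      rcases Nat.eq_zero_or_pos b with rfl | hb
      · omega
      · rw [if_neg (by omega), if_neg (by omega)]
    · rcases Nat.eq_zero_or_pos b with rfl | hb
      · simp [g]
      · -- 1 ≤ b ≤ a
        obtain ⟨b', rfl⟩ : ∃ b', b = b' + 1 := ⟨b - 1, by omega⟩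
        have ha : 1 ≤ a := by omega
        obtain ⟨a', rfl⟩ : ∃ a', a = a' + 1 := ⟨a - 1, by omega⟩
        have key : (PowerSeries.X * Cat) ^ (b'+1)
            = PowerSeries.X * (PowerSeries.X * Cat) ^ b'
              + (PowerSeries.X * Cat) ^ (b'+2) := by
          calc (PowerSeries.X * Cat) ^ (b'+1)
              = (PowerSeries.X * Cat) ^ b' * (PowerSeries.X * Cat) := pow_succ _ _
            _ = (PowerSeries.X * Cat) ^ b'
                  * (PowerSeries.X + (PowerSeries.X * Cat) ^ 2) := by rw [← Y_eq]
            _ = _ := by ring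
        rw [key, map_add, PowerSeries.coeff_succ_X_mul]
        rw [ih a' b' (by omega), ih (a'+1) (b'+2) (by omega)]
        rw [g_rec (a'+1) (b'+1) (by omega) (by omega)]
        simp

lemma numeric (a b : ℕ) (hb : 1 ≤ b) (hba : b ≤ a) :
    (1 / (a : ℚ)) * ((2 * (a - 1) - (b - 1)).choose (a - 1) : ℚ)
      = (1 / (b : ℚ)) * ((b : ℚ) * ((2*a - b - 1).factorial : ℚ)
          / (((a - b).factorial : ℚ) * (a.factorial : ℚ))) := by
  have hA : 1 ≤ a := le_trans hb hba
  rw [show 2*(a-1) - (b-1) = 2*a - b - 1 from by omega]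
  obtain ⟨n, hn⟩ : ∃ n, 2*a - b - 1 = n := ⟨_, rfl⟩
  obtain ⟨p, hp⟩ : ∃ p, a - b = p := ⟨_, rfl⟩
  obtain ⟨q, hq⟩ : ∃ q, a - 1 = q := ⟨_, rfl⟩
  have key : (n.choose q : ℚ) * (q.factorial : ℚ) * (p.factorial : ℚ)
      = (n.factorial : ℚ) := by
    have h := Nat.choose_mul_factorial_mul_factorial (show q ≤ n from by omega)
    rw [show n - q = p from by omega] at h
    exact_mod_cast congrArg (Nat.cast : ℕ → ℚ) h
  have hfa : (a.factorial : ℚ) = (a : ℚ) * (q.factorial : ℚ) := by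
    rw [show a = q + 1 from by omega, Nat.factorial_succ]
    push_cast
    ring
  rw [hn, hp, hq, hfa]
  have h1 : (a : ℚ) ≠ 0 := by positivity
  have h2 : (b : ℚ) ≠ 0 := by positivity
  have h3 : (q.factorial : ℚ) ≠ 0 := by positivity
  have h4 : (p.factorial : ℚ) ≠ 0 := by positivity
  field_simp
  linear_combination key



set_option maxRecDepth 4000 in
/-- `A(u,z) = log(1/(1−z·u·Cat(u))) = ∑_{j≥0} (z^{j+1}/(j+1))·(u·Cat(u))^{j+1}`:
the coefficient of `u^a z^b` in `A` is `(1/b)·[u^a]((u·Cat(u))^b)` for `b ≥ 1`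
(and `0` for `b = 0`). -/
theorem A_eq_log :
    A = fun d => if 1 ≤ d 1 then
      (1 / (d 1 : ℚ)) * PowerSeries.coeff (d 0) ((PowerSeries.X * Cat) ^ (d 1))
    else 0 := by
  funext d
  simp only [A]
  set a := d 0 with ha'
  set b := d 1 with hb'
  by_cases hb : 1 ≤ b
  · rw [if_pos hb]
    rw [coeff_Y_pow (2*a) a b (by omega)]
    by_cases hba : b ≤ a
    · rw [if_pos ⟨hb, hba⟩, g, if_neg (by omega), if_pos hba]
      exact numeric a b hb hba
    · rw [if_neg (by tauto), g, if_neg (by omega), if_neg (by omega)]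
      ring
  · rw [if_neg hb, if_neg (by tauto)]
end

section
/- For all nonnegative integers n and i, the identity ∑_{i≥0} C(3n+i−j+1, 2n−j)·x^i = 1/(x^{n+1}(1−x)^{2n−j+1}) − ∑_{ℓ=0}^{n} C(3n−ℓ−j, 2n−j)·x^{−ℓ−1} holds for all 0 ≤ j ≤ n, as an identity of formal Laurent series in x over ℚ. -/
open PowerSeries

lemma ps_key (m N : ℕ) :
    PowerSeries.X ^ N * PowerSeries.mk (fun i => ((m + N + i).choose m : ℚ))
      + ∑ k ∈ Finset.range N, PowerSeries.C (R := ℚ) (((m + k).choose m : ℚ)) * PowerSeries.X ^ k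
    = PowerSeries.mk fun i => ((m + i).choose m : ℚ) := by
  ext d
  simp only [map_add, PowerSeries.coeff_X_pow_mul', map_sum, PowerSeries.coeff_C_mul_X_pow,
    PowerSeries.coeff_mk]
  rw [Finset.sum_ite_eq (Finset.range N) d]
  simp only [Finset.mem_range]
  rcases le_or_gt N d with h | h
  · rw [if_pos h, if_neg (by omega), add_zero, show m + N + (d - N) = m + d by omega]
  · rw [if_neg (by omega), if_pos h, zero_add]

theorem laurent_identity_quartic (n j : ℕ) (hj : j ≤ n) :
    (HahnSeries.ofPowerSeries ℤ ℚ
        (PowerSeries.mk fun i => ((3 * n + i - j + 1).choose (2 * n - j) : ℚ)))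
      = (HahnSeries.ofPowerSeries ℤ ℚ
            (PowerSeries.X ^ (n + 1) * (1 - PowerSeries.X) ^ (2 * n - j + 1)))⁻¹
        - ∑ ℓ ∈ Finset.range (n + 1),
            HahnSeries.single (-(ℓ + 1) : ℤ) (((3 * n - ℓ - j).choose (2 * n - j) : ℚ)) := by
  set m := 2 * n - j with hm
  set A := HahnSeries.ofPowerSeries ℤ ℚ
      (PowerSeries.mk fun i => ((3 * n + i - j + 1).choose (2 * n - j) : ℚ)) with hA
  set S := ∑ ℓ ∈ Finset.range (n + 1),
      HahnSeries.single (-(ℓ + 1) : ℤ) (((3 * n - ℓ - j).choose (2 * n - j) : ℚ)) with hS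
  set P := HahnSeries.ofPowerSeries ℤ ℚ
      (PowerSeries.X ^ (n + 1) * (1 - PowerSeries.X) ^ (2 * n - j + 1)) with hP
  have hmul : (A + S) * P = 1 := by
    have hcoeff : (PowerSeries.mk fun i => ((3 * n + i - j + 1).choose (2 * n - j) : ℚ))
        = PowerSeries.mk (fun i => ((m + (n + 1) + i).choose m : ℚ)) := by
      ext i
      simp only [PowerSeries.coeff_mk]
      congr 2
      omega
    have hSP : S * HahnSeries.ofPowerSeries ℤ ℚ ((PowerSeries.X : ℚ⟦X⟧) ^ (n + 1))
        = HahnSeries.ofPowerSeries ℤ ℚ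
          (∑ k ∈ Finset.range (n + 1),
            PowerSeries.C (R := ℚ) (((m + k).choose m : ℚ)) * PowerSeries.X ^ k) := by
      rw [HahnSeries.ofPowerSeries_X_pow, hS, Finset.sum_mul, map_sum]
      rw [← Finset.sum_range_reflect]
      refine Finset.sum_congr rfl fun ℓ hℓ => ?_
      simp only [Finset.mem_range] at hℓ
      rw [map_mul, HahnSeries.ofPowerSeries_C, HahnSeries.ofPowerSeries_X_pow,
        HahnSeries.single_mul_single, mul_one]
      have h1 : (-((↑(n + 1 - 1 - ℓ) : ℤ) + 1)) + (n + 1 : ℕ) = (ℓ : ℤ) := by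
        push_cast [Nat.sub_sub]; omega
      have h2 : 3 * n - (n + 1 - 1 - ℓ) - j = m + ℓ := by omega
      rw [h1, h2,
        show (HahnSeries.C (((m + ℓ).choose m : ℚ)) : HahnSeries ℤ ℚ)
          = HahnSeries.single (0 : ℤ) (((m + ℓ).choose m : ℚ)) from rfl,
        HahnSeries.single_mul_single, zero_add, mul_one]
    have hkey := ps_key m (n + 1)
    have hunit : (PowerSeries.mk fun i => ((m + i).choose m : ℚ)) * (1 - PowerSeries.X) ^ (m + 1)
        = 1 := PowerSeries.mk_add_choose_mul_one_sub_pow_eq_one ℚ m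
    calc (A + S) * P
        = ((A * HahnSeries.ofPowerSeries ℤ ℚ ((PowerSeries.X : ℚ⟦X⟧) ^ (n + 1)))
            + S * HahnSeries.ofPowerSeries ℤ ℚ ((PowerSeries.X : ℚ⟦X⟧) ^ (n + 1)))
            * HahnSeries.ofPowerSeries ℤ ℚ ((1 - PowerSeries.X : ℚ⟦X⟧) ^ (m + 1)) := by
          rw [hP, map_mul]; ring
      _ = HahnSeries.ofPowerSeries ℤ ℚ
            ((PowerSeries.mk fun i => ((m + i).choose m : ℚ)) * (1 - PowerSeries.X) ^ (m + 1)) := by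
          rw [hSP, hA, hcoeff, ← map_mul, ← map_add, ← map_mul]
          congr 1
          rw [← hkey]; ring
      _ = 1 := by rw [hunit, map_one]
  have hP0 : P ≠ 0 := by
    intro h
    have := hmul
    rw [h, mul_zero] at this
    exact one_ne_zero this.symm
  have h : A + S = P⁻¹ := eq_inv_of_mul_eq_one_left hmul
  exact eq_sub_of_add_eq h
end

section
/- For all nonnegative integers n, the identity ∑_{i≥0} C(2n+i+1, n)·x^i = 1/(x^{n+1}(1−x)^{n+1}) − ∑_{ℓ=0}^{n} C(2n−ℓ, n)·x^{−ℓ−1} holds as an identity of formal Laurent series in x over ℚ. -/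
open PowerSeries

lemma ps_split (n : ℕ) :
    ((PowerSeries.invOneSubPow ℚ (n + 1) : ℚ⟦X⟧ˣ) : ℚ⟦X⟧)
      = (∑ ℓ ∈ Finset.range (n + 1),
          PowerSeries.C (R := ℚ) (((2 * n - ℓ).choose n : ℚ)) * PowerSeries.X ^ (n - ℓ))
        + PowerSeries.X ^ (n + 1) *
          (PowerSeries.mk fun i => ((2 * n + i + 1).choose n : ℚ)) := by
  rw [PowerSeries.invOneSubPow_val_succ_eq_mk_add_choose]
  ext k
  simp only [PowerSeries.coeff_mk, map_add, map_sum, PowerSeries.coeff_C_mul,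
    PowerSeries.coeff_X_pow, mul_ite, mul_one, mul_zero]
  rcases le_or_gt k n with hk | hk
  · rw [Finset.sum_eq_single (n - k)]
    · rw [if_pos (by omega), PowerSeries.coeff_X_pow_mul']
      rw [if_neg (by omega), add_zero]
      have h2 : 2 * n - (n - k) = n + k := by omega
      rw [h2]
    · intro b hb hbne
      rw [if_neg (by simp at hb; omega)]
    · intro h
      simp at h
  · rw [Finset.sum_eq_zero, PowerSeries.coeff_X_pow_mul', if_pos (by omega), zero_add]
    · rw [PowerSeries.coeff_mk]
      have h2 : 2 * n + (k - (n + 1)) + 1 = n + k := by omega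
      rw [h2]
    · intro b hb
      rw [if_neg (by simp at hb; omega)]

theorem laurent_identity_general (n : ℕ) :
    (HahnSeries.ofPowerSeries ℤ ℚ
        (PowerSeries.mk fun i => ((2 * n + i + 1).choose n : ℚ)))
      = (HahnSeries.ofPowerSeries ℤ ℚ
            (PowerSeries.X ^ (n + 1) * (1 - PowerSeries.X) ^ (n + 1)))⁻¹
        - ∑ ℓ ∈ Finset.range (n + 1),
            HahnSeries.single (-(ℓ + 1) : ℤ) (((2 * n - ℓ).choose n : ℚ)) := by
  have hXpow : (HahnSeries.ofPowerSeries ℤ ℚ (PowerSeries.X ^ (n + 1)))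
      = HahnSeries.single ((n + 1 : ℕ) : ℤ) (1 : ℚ) := HahnSeries.ofPowerSeries_X_pow (n + 1)
  have hone : HahnSeries.single (((n + 1 : ℕ) : ℤ)) (1 : ℚ) *
      HahnSeries.single (-((n + 1 : ℕ) : ℤ)) (1 : ℚ) = 1 := by
    rw [HahnSeries.single_mul_single, add_neg_cancel, mul_one, HahnSeries.single_zero_one]
  have hunit : ((1 - PowerSeries.X : ℚ⟦X⟧) ^ (n + 1)) *
      ((PowerSeries.invOneSubPow ℚ (n + 1) : ℚ⟦X⟧ˣ) : ℚ⟦X⟧) = 1 := by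
    rw [← PowerSeries.invOneSubPow_inv_eq_one_sub_pow]
    exact (PowerSeries.invOneSubPow ℚ (n + 1)).inv_val
  have hinv : (HahnSeries.ofPowerSeries ℤ ℚ
        (PowerSeries.X ^ (n + 1) * (1 - PowerSeries.X) ^ (n + 1)))⁻¹
      = HahnSeries.single (-((n + 1 : ℕ) : ℤ)) (1 : ℚ) *
        HahnSeries.ofPowerSeries ℤ ℚ
          ((PowerSeries.invOneSubPow ℚ (n + 1) : ℚ⟦X⟧ˣ) : ℚ⟦X⟧) := by
    apply inv_eq_of_mul_eq_one_right
    rw [map_mul, hXpow, mul_mul_mul_comm, hone, one_mul, ← map_mul, hunit, map_one]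
  have hone' : HahnSeries.single (-((n + 1 : ℕ) : ℤ)) (1 : ℚ) *
      HahnSeries.single (((n + 1 : ℕ) : ℤ)) (1 : ℚ) = 1 := by rw [mul_comm]; exact hone
  rw [hinv, ps_split n, map_add, map_mul, hXpow, mul_add, ← mul_assoc, hone', one_mul]
  have hsum : HahnSeries.single (-((n + 1 : ℕ) : ℤ)) (1 : ℚ) *
      HahnSeries.ofPowerSeries ℤ ℚ
        (∑ ℓ ∈ Finset.range (n + 1),
          PowerSeries.C (R := ℚ) (((2 * n - ℓ).choose n : ℚ)) * PowerSeries.X ^ (n - ℓ))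
      = ∑ ℓ ∈ Finset.range (n + 1),
          HahnSeries.single (-(ℓ + 1) : ℤ) (((2 * n - ℓ).choose n : ℚ)) := by
    rw [map_sum, Finset.mul_sum]
    apply Finset.sum_congr rfl
    intro ℓ hℓ
    simp only [Finset.mem_range] at hℓ
    rw [map_mul, HahnSeries.ofPowerSeries_C, HahnSeries.ofPowerSeries_X_pow,
      HahnSeries.C_apply, HahnSeries.single_mul_single, HahnSeries.single_mul_single]
    rw [one_mul, mul_one]
    congr 2
    omega
  rw [hsum]
  ring
end

section
/- Let Ω(r) = ∑_{n≥0} (1/(n+1))·C(2n,n)·C(3n,n)·r^{n+1} as a formal power series over ℚ. Then Ω satisfies the linear differential equation 6·Ω(r) + r·(27r − 1)·Ω''(r) = 0. -/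
open PowerSeries

noncomputable def Omega : PowerSeries ℚ :=
  PowerSeries.mk fun m => if m = 0 then 0 else
    (1 / (m : ℚ)) * ((2 * (m - 1)).choose (m - 1) : ℚ) * ((3 * (m - 1)).choose (m - 1) : ℚ)

lemma key (k : ℕ) :
    ((k:ℚ)+1)^2 * ((2*k+2).choose (k+1) : ℚ) * ((3*k+3).choose (k+1) : ℚ)
      = 3*(3*(k:ℚ)+2)*(3*(k:ℚ)+1) * ((2*k).choose k : ℚ) * ((3*k).choose k : ℚ) := by
  have h1 : (2*k+1+1) * (2*k+1).choose k = (2*k+1+1).choose (k+1) * (k+1) :=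
    Nat.add_one_mul_choose_eq (2*k+1) k
  rw [show 2*k+1+1 = 2*k+2 from by omega] at h1
  have h2 : (2*k).choose k * (2*k+1) = (2*k+1).choose k * (2*k+1-k) :=
    Nat.choose_mul_succ_eq (2*k) k
  rw [show 2*k+1-k = k+1 from by omega] at h2
  have h3 : (3*k+2+1) * (3*k+2).choose k = (3*k+2+1).choose (k+1) * (k+1) :=
    Nat.add_one_mul_choose_eq (3*k+2) k
  rw [show 3*k+2+1 = 3*k+3 from by omega] at h3
  have h4 : (3*k+1).choose k * (3*k+1+1) = (3*k+1+1).choose k * (3*k+1+1-k) :=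
    Nat.choose_mul_succ_eq (3*k+1) k
  rw [show 3*k+1+1 = 3*k+2 from by omega, show 3*k+2-k = 2*k+2 from by omega] at h4
  have h5 : (3*k).choose k * (3*k+1) = (3*k+1).choose k * (3*k+1-k) :=
    Nat.choose_mul_succ_eq (3*k) k
  rw [show 3*k+1-k = 2*k+1 from by omega] at h5
  qify at h1 h2 h3 h4 h5
  linear_combination (-((k:ℚ)+1) * ((3*k+3).choose (k+1) : ℚ)) * h1
    + (-3*(2*(k:ℚ)+2) * ((3*k+2).choose k : ℚ)) * h2
    + (-(2*(k:ℚ)+2) * ((2*k+1).choose k : ℚ)) * h3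
    + (-3*(2*(k:ℚ)+1) * ((2*k).choose k : ℚ)) * h4
    + (-3*(3*(k:ℚ)+2) * ((2*k).choose k : ℚ)) * h5

lemma coeff_Omega_succ (m : ℕ) : (coeff (m+1)) Omega =
    (1 / ((m:ℚ)+1)) * ((2*m).choose m : ℚ) * ((3*m).choose m : ℚ) := by
  simp only [Omega, coeff_mk, Nat.add_sub_cancel, if_neg (Nat.succ_ne_zero m)]
  push_cast
  ring

theorem omega_ode : 6 * Omega
    + PowerSeries.X * (27 * PowerSeries.X - 1) * (d⁄dX ℚ) ((d⁄dX ℚ) Omega) = 0 := by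
  set g := (d⁄dX ℚ) ((d⁄dX ℚ) Omega) with hg
  have hrw : PowerSeries.X * (27 * PowerSeries.X - 1) * g
      = (C 27) * (X^2 * g) - X^1 * g := by
    rw [map_ofNat C 27]; ring
  have h6 : (6 : ℚ⟦X⟧) = C 6 := (map_ofNat C 6).symm
  ext n
  rw [hrw, h6, map_zero, map_add, map_sub, coeff_C_mul, coeff_C_mul]
  have hcg : ∀ m : ℕ, (coeff m) g = (coeff (m+2)) Omega * (m+2) * (m+1) := by
    intro m
    rw [hg, coeff_derivative, coeff_derivative]
    push_cast; ring
  match n with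
  | 0 =>
    simp [coeff_X_pow_mul', Omega, coeff_mk]
  | 1 =>
    rw [coeff_X_pow_mul', coeff_X_pow_mul', if_neg (by norm_num), if_pos (by norm_num)]
    rw [hcg]
    norm_num [Omega, coeff_mk, Nat.choose]
  | (k+2) =>
    rw [coeff_X_pow_mul', coeff_X_pow_mul', if_pos (by omega), if_pos (by omega)]
    have e1 : k+2-2 = k := by omega
    have e2 : k+2-1 = k+1 := by omega
    rw [e1, e2, hcg, hcg, coeff_Omega_succ, coeff_Omega_succ]
    have hk := key (k+1)
    rw [show 2*(k+1)+2 = 2*(k+2) from by ring, show 3*(k+1)+3 = 3*(k+2) from by ring,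
      show k+1+1 = k+2 from rfl] at hk
    push_cast at hk ⊢
    have h1 : ((k:ℚ)+2) ≠ 0 := by positivity
    have h2 : ((k:ℚ)+3) ≠ 0 := by positivity
    field_simp
    linear_combination (-((k:ℚ)+3)) * hk
end

section
/- Let R be the unique formal power series in ℚ[[t]] with zero constant term satisfying t = ∑_{n≥0} (1/(n+1))·C(2n,n)·C(3n,n)·R^{n+1}. Then R satisfies the differential equation R·(27R − 1)·R'' = 6t·(R')³, where R' and R'' denote formal derivatives with respect to t. -/
open PowerSeries

section Aux
open Finset Nat

noncomputable def aQ (n : ℕ) : ℚ :=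
  (1 / (n + 1 : ℚ)) * ((2 * n).choose n : ℚ) * ((3 * n).choose n : ℚ)

lemma aQ_fact (n : ℕ) : aQ n = ((3*n)! : ℚ) / ((n ! : ℚ)^3 * (n+1)) := by
  have h1 : n ≤ 2*n := by omega
  have h2 : n ≤ 3*n := by omega
  have e1 : 2*n - n = n := by omega
  have e2 : 3*n - n = 2*n := by omega
  rw [aQ, Nat.cast_choose ℚ h1, Nat.cast_choose ℚ h2, e1, e2]
  have hn : (n ! : ℚ) ≠ 0 := by positivity
  have h2n : ((2*n)! : ℚ) ≠ 0 := by positivity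
  have hn1 : ((n : ℚ) + 1) ≠ 0 := by positivity
  field_simp

lemma aQ_rec (n : ℕ) :
    aQ (n+1) * ((n:ℚ)+2) * ((n:ℚ)+1) = aQ n * (27 * n * ((n:ℚ)+1) + 6) := by
  have e3 : 3*(n+1) = (3*n+2)+1 := by omega
  rw [aQ_fact, aQ_fact, e3]
  rw [Nat.factorial_succ (3*n+2), Nat.factorial_succ (3*n+1), Nat.factorial_succ (3*n),
    Nat.factorial_succ n]
  have hn : (n ! : ℚ) ≠ 0 := by positivity
  have h3n : ((3*n)! : ℚ) ≠ 0 := by positivity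
  have hn1 : ((n : ℚ) + 1) ≠ 0 := by positivity
  have hn2 : ((n : ℚ) + 2) ≠ 0 := by positivity
  push_cast
  field_simp
  ring

noncomputable def WN (R : PowerSeries ℚ) (N : ℕ) : PowerSeries ℚ :=
  ∑ n ∈ range N, PowerSeries.C (aQ n) * R^(n+1)

noncomputable def SN (R : PowerSeries ℚ) (N : ℕ) : PowerSeries ℚ :=
  ∑ n ∈ range N, PowerSeries.C (aQ n * ((n:ℚ)+1)) * R^n

noncomputable def TN (R : PowerSeries ℚ) (N : ℕ) : PowerSeries ℚ :=
  ∑ n ∈ range N, PowerSeries.C (aQ (n+1) * ((n:ℚ)+2) * ((n:ℚ)+1)) * R^n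

noncomputable def Sser (R : PowerSeries ℚ) : PowerSeries ℚ :=
  PowerSeries.mk fun m => ∑ n ∈ range (m+1), aQ n * ((n:ℚ)+1) * PowerSeries.coeff m (R^n)

noncomputable def Tser (R : PowerSeries ℚ) : PowerSeries ℚ :=
  PowerSeries.mk fun m =>
    ∑ n ∈ range (m+1), aQ (n+1) * ((n:ℚ)+2) * ((n:ℚ)+1) * PowerSeries.coeff m (R^n)

lemma coeff_pow_vanish {R : PowerSeries ℚ} (h0 : constantCoeff R = 0)
    {m n : ℕ} (h : m < n) : PowerSeries.coeff m (R^n) = 0 :=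
  (X_pow_dvd_iff.mp (pow_dvd_pow_of_dvd (X_dvd_iff.mpr h0) n)) m h

lemma coeff_mul_congr {A B F : PowerSeries ℚ} {m : ℕ}
    (h : ∀ k ≤ m, PowerSeries.coeff k A = PowerSeries.coeff k B) :
    PowerSeries.coeff m (F * A) = PowerSeries.coeff m (F * B) := by
  rw [coeff_mul, coeff_mul]
  refine Finset.sum_congr rfl fun p hp => ?_
  rw [Finset.HasAntidiagonal.mem_antidiagonal] at hp
  rw [h p.2 (by omega)]

lemma coeff_S_eq {R : PowerSeries ℚ} (h0 : constantCoeff R = 0) {m N : ℕ} (h : m < N) :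
    PowerSeries.coeff m (Sser R) = PowerSeries.coeff m (SN R N) := by
  rw [Sser, coeff_mk, SN, map_sum]
  simp only [coeff_C_mul]
  refine Finset.sum_subset (by intro x hx; simp only [mem_range] at *; omega) ?_
  intro n hn hnn
  simp only [mem_range] at hn hnn
  rw [coeff_pow_vanish h0 (by omega), mul_zero]

lemma coeff_T_eq {R : PowerSeries ℚ} (h0 : constantCoeff R = 0) {m N : ℕ} (h : m < N) :
    PowerSeries.coeff m (Tser R) = PowerSeries.coeff m (TN R N) := by
  rw [Tser, coeff_mk, TN, map_sum]
  simp only [coeff_C_mul]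
  refine Finset.sum_subset (by intro x hx; simp only [mem_range] at *; omega) ?_
  intro n hn hnn
  simp only [mem_range] at hn hnn
  rw [coeff_pow_vanish h0 (by omega), mul_zero]

lemma dWN (R : PowerSeries ℚ) (N : ℕ) :
    (d⁄dX ℚ) (WN R N) = SN R N * (d⁄dX ℚ) R := by
  rw [WN, map_sum, SN, Finset.sum_mul]
  refine Finset.sum_congr rfl fun n _ => ?_
  rw [Derivation.leibniz, Derivation.leibniz_pow, derivative_C]
  simp only [smul_eq_mul, nsmul_eq_mul, smul_zero, mul_zero, add_zero, Nat.add_sub_cancel,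
    map_mul, map_add, map_one, map_natCast, map_ofNat]
  push_cast
  ring

lemma dSN (R : PowerSeries ℚ) (N : ℕ) :
    (d⁄dX ℚ) (SN R (N+1)) = TN R N * (d⁄dX ℚ) R := by
  rw [SN, map_sum, Finset.sum_range_succ', TN, Finset.sum_mul]
  have h00 : (d⁄dX ℚ) (PowerSeries.C (aQ 0 * (((0:ℕ):ℚ)+1)) * R^0) = 0 := by
    simp
  rw [h00, add_zero]
  refine Finset.sum_congr rfl fun n _ => ?_
  rw [Derivation.leibniz, Derivation.leibniz_pow, derivative_C]
  simp only [smul_eq_mul, nsmul_eq_mul, smul_zero, mul_zero, add_zero, Nat.add_sub_cancel,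
    map_mul, map_add, map_one, map_natCast, map_ofNat]
  push_cast
  ring

lemma keyId (R : PowerSeries ℚ) (N : ℕ) :
    R * (27*R - 1) * TN R N + 6 * WN R N
      = PowerSeries.C (aQ N * (27 * (N:ℚ) * ((N:ℚ)+1))) * R^(N+1) := by
  induction N with
  | zero => simp [TN, WN]
  | succ N ih =>
    rw [TN, Finset.sum_range_succ, ← TN, WN, Finset.sum_range_succ, ← WN]
    have hC : (PowerSeries.C) (aQ (N+1) * ((N:ℚ)+2) * ((N:ℚ)+1))
        = (PowerSeries.C) (aQ N * (27*(N:ℚ)*((N:ℚ)+1)+6)) := by rw [aQ_rec]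
    push_cast
    simp only [map_mul, map_add, map_natCast, map_ofNat, map_one] at hC ih ⊢
    linear_combination ih - R^(N+1) * hC

end Aux

theorem R_ode_quartic (R : PowerSeries ℚ)
    (h0 : PowerSeries.constantCoeff R = 0)
    (hR : ∀ m : ℕ, PowerSeries.coeff m (PowerSeries.X : PowerSeries ℚ)
      = ∑ n ∈ Finset.range m,
          (1 / (n + 1 : ℚ)) * ((2 * n).choose n : ℚ) * ((3 * n).choose n : ℚ)
            * PowerSeries.coeff m (R ^ (n + 1))) :
    R * (27 * R - 1) * (d⁄dX ℚ) ((d⁄dX ℚ) R)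
      = 6 * PowerSeries.X * ((d⁄dX ℚ) R) ^ 3 := by
  -- X agrees with the truncated Omega sums
  have hW : ∀ m N : ℕ, m ≤ N →
      PowerSeries.coeff m (PowerSeries.X : PowerSeries ℚ)
        = PowerSeries.coeff m (WN R N) := by
    intro m N h
    rw [hR m, WN, map_sum]
    simp only [coeff_C_mul, aQ]
    refine Finset.sum_subset (by intro x hx; simp only [Finset.mem_range] at *; omega) ?_
    intro n hn hnn
    simp only [Finset.mem_range] at hn hnn
    rw [coeff_pow_vanish h0 (by omega), mul_zero]
  -- (1) : Sser R * R' = 1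
  have hS1 : Sser R * (d⁄dX ℚ) R = 1 := by
    ext m
    rw [mul_comm]
    rw [coeff_mul_congr (fun k hk => coeff_S_eq h0 (by omega : k < m+1)),
      mul_comm, ← dWN, coeff_derivative, ← hW (m+1) (m+1) le_rfl, ← coeff_derivative,
      derivative_X]
  -- (3) : (Sser R)' = Tser R * R'
  have hDS : (d⁄dX ℚ) (Sser R) = Tser R * (d⁄dX ℚ) R := by
    ext m
    rw [coeff_derivative, coeff_S_eq h0 (by omega : m+1 < m+2), ← coeff_derivative, dSN,
      mul_comm]
    rw [coeff_mul_congr (fun k hk => (coeff_T_eq h0 (by omega : k < m+1)).symm), mul_comm]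
  -- (4) : substituted ODE of Omega
  have hAlg : R * (27*R - 1) * Tser R + 6 * PowerSeries.X = 0 := by
    ext m
    rw [map_add, map_zero]
    have e1 : PowerSeries.coeff m (R * (27*R-1) * Tser R)
        = PowerSeries.coeff m (R * (27*R-1) * TN R (m+1)) :=
      coeff_mul_congr (fun k hk => coeff_T_eq h0 (by omega))
    have e2 : PowerSeries.coeff m (6 * PowerSeries.X)
        = PowerSeries.coeff m (6 * WN R (m+1)) :=
      coeff_mul_congr (fun k hk => hW k (m+1) (by omega))
    rw [e1, e2, ← map_add, keyId, coeff_C_mul, coeff_pow_vanish h0 (by omega), mul_zero]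
  -- Sser R is nonzero
  have hS0 : Sser R ≠ 0 := by
    have hc : PowerSeries.coeff 0 (Sser R) = 1 := by
      rw [Sser, coeff_mk]
      norm_num [aQ]
    intro h
    rw [h, map_zero] at hc
    exact zero_ne_one hc
  -- Leibniz on (1)
  have hLeib : Sser R * (d⁄dX ℚ) ((d⁄dX ℚ) R) + (d⁄dX ℚ) R * (d⁄dX ℚ) (Sser R) = 0 := by
    have h := Derivation.leibniz (d⁄dX ℚ) (Sser R) ((d⁄dX ℚ) R)
    rw [hS1, Derivation.map_one_eq_zero, smul_eq_mul, smul_eq_mul] at h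
    linear_combination -h
  apply mul_left_cancel₀ hS0
  linear_combination (R*(27*R-1)) * hLeib - (R*(27*R-1)*((d⁄dX ℚ) R)) * hDS
    - (((d⁄dX ℚ) R)^2) * hAlg - (6*PowerSeries.X*((d⁄dX ℚ) R)^2) * hS1
end

section
/- Let R be the unique formal power series in ℚ[[t]] with zero constant term satisfying t = ∑_{n≥0} (1/(n+1))·C(2n,n)²·R^{n+1}. Then R satisfies the differential equation R·(16R − 1)·R'' = 4t·(R')³. -/
open PowerSeries

open Finset in
private def aa (n : ℕ) : ℚ := ((2 * n).choose n : ℚ) ^ 2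

private lemma aa_ratio (n : ℕ) : ((n:ℚ) + 1) ^ 2 * aa (n + 1) = 4 * (2 * n + 1) ^ 2 * aa n := by
  have h := Nat.succ_mul_centralBinom_succ n
  have h' : ((n:ℚ) + 1) * ((2 * (n+1)).choose (n+1) : ℚ)
      = 2 * (2 * n + 1) * ((2*n).choose n : ℚ) := by
    have := congrArg (Nat.cast : ℕ → ℚ) h
    push_cast [Nat.centralBinom] at this
    linarith
  unfold aa
  linear_combination (((n:ℚ)+1) * ((2*(n+1)).choose (n+1):ℚ)
    + 2*(2*(n:ℚ)+1)*((2*n).choose n:ℚ)) * h'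

private lemma coeff_pow_zero (R : ℚ⟦X⟧) (h0 : constantCoeff R = 0) {m n : ℕ} (h : m < n) :
    PowerSeries.coeff m (R ^ n) = 0 := by
  have hx : (X : ℚ⟦X⟧) ∣ R := X_dvd_iff.2 h0
  exact X_pow_dvd_iff.1 (pow_dvd_pow_of_dvd hx n) m h

private lemma coeff_pow_mul_zero (R : ℚ⟦X⟧) (h0 : constantCoeff R = 0) (s : ℚ⟦X⟧) {m n : ℕ}
    (h : m < n) : PowerSeries.coeff m (R ^ n * s) = 0 := by
  have hx : (X : ℚ⟦X⟧) ∣ R := X_dvd_iff.2 h0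
  exact X_pow_dvd_iff.1 (Dvd.dvd.mul_right (pow_dvd_pow_of_dvd hx n) s) m h

open Finset in
private lemma coeff_comp_mul (R : ℚ⟦X⟧) (h0 : constantCoeff R = 0) (e : ℕ → ℚ) (s : ℚ⟦X⟧)
    (m : ℕ) :
    PowerSeries.coeff m
      ((PowerSeries.mk fun k => ∑ n ∈ range (k+1), e n * PowerSeries.coeff k (R ^ n)) * s)
      = ∑ n ∈ range (m+1), e n * PowerSeries.coeff m (R ^ n * s) := by
  rw [PowerSeries.coeff_mul]
  have step1 : ∀ p ∈ Finset.HasAntidiagonal.antidiagonal m,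
      (PowerSeries.coeff p.1 (PowerSeries.mk fun k =>
        ∑ n ∈ range (k+1), e n * PowerSeries.coeff k (R ^ n))) * PowerSeries.coeff p.2 s
      = ∑ n ∈ range (m+1), e n * (PowerSeries.coeff p.1 (R ^ n) * PowerSeries.coeff p.2 s) := by
    intro p hp
    rw [PowerSeries.coeff_mk, Finset.sum_mul]
    have hp1 : p.1 ≤ m := by
      have := Finset.HasAntidiagonal.antidiagonal.fst_le hp; omega
    calc ∑ n ∈ range (p.1+1), e n * PowerSeries.coeff p.1 (R ^ n) * PowerSeries.coeff p.2 s
        = ∑ n ∈ range (m+1), e n * PowerSeries.coeff p.1 (R ^ n) * PowerSeries.coeff p.2 s := by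
          apply Finset.sum_subset (Finset.range_subset_range.2 (by omega))
          intro n _ hn
          rw [Finset.mem_range, not_lt] at hn
          rw [coeff_pow_zero R h0 (by omega)]; ring
      _ = ∑ n ∈ range (m+1), e n *
            (PowerSeries.coeff p.1 (R ^ n) * PowerSeries.coeff p.2 s) := by
          apply Finset.sum_congr rfl; intro n _; ring
  rw [Finset.sum_congr rfl step1, Finset.sum_comm]
  apply Finset.sum_congr rfl
  intro n _
  rw [PowerSeries.coeff_mul, Finset.mul_sum]

open Finset in
theorem R_ode_general (R : PowerSeries ℚ)
    (h0 : PowerSeries.constantCoeff R = 0)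
    (hR : ∀ m : ℕ, PowerSeries.coeff m (PowerSeries.X : PowerSeries ℚ)
      = ∑ n ∈ Finset.range m,
          (1 / (n + 1 : ℚ)) * ((2 * n).choose n : ℚ) ^ 2
            * PowerSeries.coeff m (R ^ (n + 1))) :
    R * (16 * R - 1) * (d⁄dX ℚ) ((d⁄dX ℚ) R)
      = 4 * PowerSeries.X * ((d⁄dX ℚ) R) ^ 3 := by
  set DR := (d⁄dX ℚ) R with hDR
  -- the composed series g = f(R) and h = f'(R)
  set g : ℚ⟦X⟧ := PowerSeries.mk fun m =>
    ∑ n ∈ range (m+1), aa n * PowerSeries.coeff m (R ^ n) with hgdef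
  set h : ℚ⟦X⟧ := PowerSeries.mk fun m =>
    ∑ n ∈ range (m+1), (((n:ℚ)+1) * aa (n+1)) * PowerSeries.coeff m (R ^ n) with hhdef
  -- derivative of powers of R, coefficientwise
  have hpow : ∀ (n m : ℕ), ((m:ℚ)+1) * PowerSeries.coeff (m+1) (R ^ (n+1))
      = ((n:ℚ)+1) * PowerSeries.coeff m (R ^ n * DR) := by
    intro n m
    have hd : PowerSeries.coeff m ((d⁄dX ℚ) (R ^ (n+1)))
        = PowerSeries.coeff (m+1) (R ^ (n+1)) * ((m:ℚ)+1) := by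
      rw [PowerSeries.coeff_derivative]
    have hl : (d⁄dX ℚ) (R ^ (n+1)) = (n+1) • (R ^ n • DR) := by
      rw [Derivation.leibniz_pow]
      simp [hDR]
    rw [hl] at hd
    rw [map_nsmul, smul_eq_mul, nsmul_eq_mul] at hd
    push_cast at hd
    linarith [hd]
  -- Step A : differentiating the defining relation : f(R) · R' = 1 coefficientwise
  have hA : ∀ m : ℕ, PowerSeries.coeff m (1 : ℚ⟦X⟧)
      = ∑ n ∈ range (m+1), aa n * PowerSeries.coeff m (R ^ n * DR) := by
    intro m
    have h1 := hR (m+1)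
    have h2 : PowerSeries.coeff m (1 : ℚ⟦X⟧)
        = ((m:ℚ)+1) * PowerSeries.coeff (m+1) (X : ℚ⟦X⟧) := by
      rcases m with _ | m <;> simp [PowerSeries.coeff_one, PowerSeries.coeff_X]
    rw [h2, h1, Finset.mul_sum]
    apply Finset.sum_congr rfl
    intro n _
    have hn1 : ((n:ℚ)+1) ≠ 0 := by positivity
    have hthis := hpow n m
    have key : (1/((n:ℚ)+1)) * ((n:ℚ)+1) = 1 := by field_simp
    simp only [aa]
    linear_combination (1/((n:ℚ)+1)) * (((2*n).choose n:ℚ)^2) * hthis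
      + (((2*n).choose n:ℚ)^2) * (PowerSeries.coeff m (R^n*DR)) * key
  -- Step B : g · R' = 1
  have hg1 : g * DR = 1 := by
    ext m
    rw [hgdef, coeff_comp_mul R h0 aa DR m]
    exact (hA m).symm
  -- Step C : chain rule, g' = h · R'
  have hdg : (d⁄dX ℚ) g = h * DR := by
    ext m
    rw [hhdef, coeff_comp_mul R h0 _ DR m]
    rw [PowerSeries.coeff_derivative, hgdef, PowerSeries.coeff_mk, Finset.sum_mul]
    rw [Finset.sum_range_succ']
    have hz : aa 0 * PowerSeries.coeff (m+1) (R ^ 0) * ((m:ℚ)+1) = 0 := by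
      simp [PowerSeries.coeff_one, Nat.succ_ne_zero]
    rw [hz, add_zero]
    apply Finset.sum_congr rfl
    intro i _
    linear_combination aa (i+1) * hpow i m
  -- Step D : the hypergeometric relation composed with R : R(1-16R)·f'(R) = 4X
  have hkey : R * (1 - 16*R) * h = 4 * X := by
    have hrw : R * (1 - 16*R) * h = h * (R - (PowerSeries.C (16:ℚ)) * R^2) := by
      have : (PowerSeries.C (16:ℚ)) = (16 : ℚ⟦X⟧) := by
        simp [map_ofNat]
      rw [this]; ring
    ext m
    rw [hrw, hhdef, coeff_comp_mul R h0 _ _ m]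
    have hsplit : ∀ n : ℕ, PowerSeries.coeff m (R ^ n * (R - (PowerSeries.C (16:ℚ)) * R^2))
        = PowerSeries.coeff m (R ^ (n+1)) - 16 * PowerSeries.coeff m (R ^ (n+2)) := by
      intro n
      have : R ^ n * (R - (PowerSeries.C (16:ℚ)) * R^2)
          = R ^ (n+1) - (PowerSeries.C (16:ℚ)) * R ^ (n+2) := by ring
      rw [this, map_sub, PowerSeries.coeff_C_mul]
    rw [Finset.sum_congr rfl (fun n _ => by rw [hsplit n])]
    -- abbreviate A k := coeff m (R^(k+1))
    have hAm : PowerSeries.coeff m (R ^ (m+1)) = 0 := coeff_pow_zero R h0 (by omega)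
    have hAm1 : PowerSeries.coeff m (R ^ (m+2)) = 0 := coeff_pow_zero R h0 (by omega)
    have hRHS : PowerSeries.coeff m ((4 : ℚ⟦X⟧) * X)
        = ∑ n ∈ range (m+1), 4 * ((1 / ((n:ℚ) + 1)) * aa n) * PowerSeries.coeff m (R ^ (n+1)) := by
      have h4 : (PowerSeries.C (4:ℚ)) = (4 : ℚ⟦X⟧) := by simp [map_ofNat]
      rw [← h4, PowerSeries.coeff_C_mul, hR m]
      rw [Finset.sum_range_succ, hAm]
      rw [Finset.mul_sum]
      simp only [mul_zero, add_zero]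
      apply Finset.sum_congr rfl
      intro n _
      unfold aa; ring
    rw [hRHS]
    -- now a pure finite-sum identity
    rw [Finset.sum_congr rfl (fun (n : ℕ) _ => (mul_sub (((n:ℚ)+1) * aa (n+1)) _ _))]
    rw [Finset.sum_sub_distrib]
    rw [Finset.sum_range_succ' (fun (n : ℕ) => (((n:ℚ)+1) * aa (n+1)) * PowerSeries.coeff m (R ^ (n+1)))]
    rw [Finset.sum_range_succ (fun (n : ℕ) => (((n:ℚ)+1) * aa (n+1)) * (16 * PowerSeries.coeff m (R ^ (n+2))))]
    rw [Finset.sum_range_succ' (fun (n : ℕ) => 4 * ((1 / ((n:ℚ) + 1)) * aa n) * PowerSeries.coeff m (R ^ (n+1)))]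
    rw [hAm1, mul_zero, mul_zero, add_zero]
    have hsum : ∑ k ∈ range m,
        ((((k:ℚ)+1)+1) * aa (k+1+1) * PowerSeries.coeff m (R ^ (k+1+1))
          - ((k:ℚ)+1) * aa (k+1) * (16 * PowerSeries.coeff m (R ^ (k+2))))
        = ∑ k ∈ range m, 4 * (1 / (((k:ℚ)+1) + 1) * aa (k+1))
            * PowerSeries.coeff m (R ^ (k+1+1)) := by
      apply Finset.sum_congr rfl
      intro k _
      have hratio := aa_ratio (k+1)
      have hk2 : ((k:ℚ)+2) ≠ 0 := by positivity
      rw [show k+1+1 = k+2 from by omega]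
      push_cast at hratio ⊢
      field_simp
      linear_combination (PowerSeries.coeff m (R ^ (k+2))) * hratio
    rw [Finset.sum_sub_distrib] at hsum
    have ht : ((0:ℚ)+1) * aa (0+1) * PowerSeries.coeff m (R ^ (0+1))
        = 4 * (1 / ((0:ℚ) + 1) * aa 0) * PowerSeries.coeff m (R ^ (0+1)) := by
      norm_num [aa]
    push_cast
    push_cast at hsum ht
    linarith [hsum, ht]
  -- Step E : conclude
  have hgne : g ≠ 0 := by
    intro hg
    rw [hg, zero_mul] at hg1
    exact one_ne_zero hg1.symm
  have hleib : g * (d⁄dX ℚ) DR + DR * (h * DR) = 0 := by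
    have := congrArg (d⁄dX ℚ) hg1
    rw [Derivation.leibniz, Derivation.map_one_eq_zero] at this
    rw [smul_eq_mul, smul_eq_mul] at this
    rw [hdg] at this
    linear_combination this
  apply mul_left_cancel₀ hgne
  linear_combination (R * (16*R - 1)) * hleib + (DR^2) * hkey + (-(4*X*DR^2)) * hg1
end

section
/- There exists a unique formal power series R ∈ ℚ[[t]] with zero constant term such that t = ∑_{n≥0} (1/(n+1))·C(2n,n)·C(3n,n)·R^{n+1}, and its first coefficients are R = t − 3t² − 12t³ − 105t⁴ − 1206t⁵ + O(t⁶). -/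
open PowerSeries Finset

namespace RQuarticAux

noncomputable def c (n : ℕ) : ℚ :=
  (1 / (n + 1 : ℚ)) * ((2 * n).choose n : ℚ) * ((3 * n).choose n : ℚ)

lemma c_zero : c 0 = 1 := by norm_num [c]

noncomputable def Phi (R : PowerSeries ℚ) : PowerSeries ℚ :=
  PowerSeries.mk fun m =>
    PowerSeries.coeff m (PowerSeries.X : PowerSeries ℚ)
      - ∑ n ∈ Finset.Ico 1 m, c n * PowerSeries.coeff m (R ^ (n + 1))

lemma constantCoeff_Phi (R : PowerSeries ℚ) : PowerSeries.constantCoeff (Phi R) = 0 := by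
  rw [← PowerSeries.coeff_zero_eq_constantCoeff]
  simp [Phi]

lemma pow_coeff_eq {R S : PowerSeries ℚ} (hR : PowerSeries.constantCoeff R = 0)
    (hS : PowerSeries.constantCoeff S = 0) {m : ℕ}
    (h : ∀ k < m, PowerSeries.coeff k R = PowerSeries.coeff k S) :
    ∀ n : ℕ, ∀ j ≤ m, (j < m ∨ 2 ≤ n) →
      PowerSeries.coeff j (R ^ n) = PowerSeries.coeff j (S ^ n) := by
  have hR0 : PowerSeries.coeff 0 R = 0 := by rwa [PowerSeries.coeff_zero_eq_constantCoeff]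
  have hS0 : PowerSeries.coeff 0 S = 0 := by rwa [PowerSeries.coeff_zero_eq_constantCoeff]
  intro n
  induction n with
  | zero => intro j _ _; rfl
  | succ n ih =>
    intro j hj hcase
    rcases Nat.eq_zero_or_pos n with rfl | hn
    · rcases hcase with h1 | h2
      · simpa using h j h1
      · omega
    · rw [pow_succ', pow_succ', PowerSeries.coeff_mul, PowerSeries.coeff_mul]
      apply Finset.sum_congr rfl
      intro p hp
      rw [Finset.HasAntidiagonal.mem_antidiagonal] at hp
      rcases Nat.eq_zero_or_pos p.1 with hp1 | hp1
      · rw [hp1, hR0, hS0, zero_mul, zero_mul]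
      · have hp2 : p.2 < m := by omega
        have h2 : PowerSeries.coeff p.2 (R ^ n) = PowerSeries.coeff p.2 (S ^ n) :=
          ih p.2 (le_of_lt hp2) (Or.inl hp2)
        rcases Nat.lt_or_ge p.1 m with hlt | hge
        · rw [h p.1 hlt, h2]
        · have hp1m : p.1 = m := by omega
          have hp20 : p.2 = 0 := by omega
          have hc : PowerSeries.coeff p.2 (R ^ n) = 0 := by
            rw [hp20, PowerSeries.coeff_zero_eq_constantCoeff, map_pow, hR]
            exact zero_pow (by omega)
          have hc' : PowerSeries.coeff p.2 (S ^ n) = 0 := by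
            rw [hp20, PowerSeries.coeff_zero_eq_constantCoeff, map_pow, hS]
            exact zero_pow (by omega)
          rw [hc, hc', mul_zero, mul_zero]

lemma Phi_coeff_eq {R S : PowerSeries ℚ} (hR : PowerSeries.constantCoeff R = 0)
    (hS : PowerSeries.constantCoeff S = 0) {m : ℕ}
    (h : ∀ k < m, PowerSeries.coeff k R = PowerSeries.coeff k S) :
    PowerSeries.coeff m (Phi R) = PowerSeries.coeff m (Phi S) := by
  simp only [Phi, PowerSeries.coeff_mk]
  congr 1
  apply Finset.sum_congr rfl
  intro n hn
  rw [Finset.mem_Ico] at hn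
  rw [pow_coeff_eq hR hS h (n + 1) m le_rfl (Or.inr (by omega))]

noncomputable def seq : ℕ → PowerSeries ℚ
  | 0 => 0
  | (j + 1) => Phi (seq j)

lemma seq_const (j : ℕ) : PowerSeries.constantCoeff (seq j) = 0 := by
  cases j with
  | zero => simp [seq]
  | succ j => exact constantCoeff_Phi _

lemma seq_stable : ∀ j : ℕ, ∀ k < j, PowerSeries.coeff k (seq j) = PowerSeries.coeff k (seq (j + 1)) := by
  intro j
  induction j with
  | zero => intro k hk; omega
  | succ j ih =>
    intro k hk
    show PowerSeries.coeff k (Phi (seq j)) = PowerSeries.coeff k (Phi (seq (j + 1)))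
    exact Phi_coeff_eq (seq_const j) (seq_const (j + 1)) fun l hl => ih l (by omega)

noncomputable def Rsol : PowerSeries ℚ :=
  PowerSeries.mk fun m => PowerSeries.coeff m (seq (m + 1))

lemma coeff_Rsol_eq (m j : ℕ) (h : m < j) :
    PowerSeries.coeff m (seq j) = PowerSeries.coeff m Rsol := by
  have : ∀ j, m + 1 ≤ j → PowerSeries.coeff m (seq j) = PowerSeries.coeff m (seq (m + 1)) := by
    intro j hj
    induction j, hj using Nat.le_induction with
    | base => rfl
    | succ j hj ih => rw [← seq_stable j m (by omega), ih]
  rw [this j h, Rsol, PowerSeries.coeff_mk]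

lemma Rsol_const : PowerSeries.constantCoeff Rsol = 0 := by
  rw [← PowerSeries.coeff_zero_eq_constantCoeff, ← coeff_Rsol_eq 0 1 (by omega),
    PowerSeries.coeff_zero_eq_constantCoeff]
  exact seq_const 1

lemma Phi_Rsol : Phi Rsol = Rsol := by
  ext m
  have h1 : PowerSeries.coeff m (Phi Rsol) = PowerSeries.coeff m (Phi (seq (m + 1))) :=
    Phi_coeff_eq Rsol_const (seq_const (m + 1))
      (fun k hk => (coeff_Rsol_eq k (m + 1) (by omega)).symm)
  rw [h1]
  exact coeff_Rsol_eq m (m + 2) (by omega)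

def Spec (R : PowerSeries ℚ) : Prop :=
  ∀ m : ℕ, PowerSeries.coeff m (PowerSeries.X : PowerSeries ℚ)
    = ∑ n ∈ Finset.range m,
        (1 / (n + 1 : ℚ)) * ((2 * n).choose n : ℚ) * ((3 * n).choose n : ℚ)
          * PowerSeries.coeff m (R ^ (n + 1))

lemma spec_iff (R : PowerSeries ℚ) (hR : PowerSeries.constantCoeff R = 0) :
    Spec R ↔ Phi R = R := by
  have key : ∀ m : ℕ, 0 < m →
      ∑ n ∈ Finset.range m, c n * PowerSeries.coeff m (R ^ (n + 1))
        = PowerSeries.coeff m R + ∑ n ∈ Finset.Ico 1 m, c n * PowerSeries.coeff m (R ^ (n + 1)) := by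
    intro m hm
    rw [Finset.range_eq_Ico, Finset.sum_eq_sum_Ico_succ_bot hm]
    simp [c_zero]
  constructor
  · intro hs
    ext m
    rcases Nat.eq_zero_or_pos m with rfl | hm
    · rw [PowerSeries.coeff_zero_eq_constantCoeff]
      rw [constantCoeff_Phi, hR]
    · have := hs m
      simp only [Phi, PowerSeries.coeff_mk]
      rw [this]
      have : ∑ n ∈ Finset.range m,
          (1 / (n + 1 : ℚ)) * ((2 * n).choose n : ℚ) * ((3 * n).choose n : ℚ)
            * PowerSeries.coeff m (R ^ (n + 1))
          = ∑ n ∈ Finset.range m, c n * PowerSeries.coeff m (R ^ (n + 1)) := rfl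
      rw [this, key m hm]
      ring
  · intro hfix m
    rcases Nat.eq_zero_or_pos m with rfl | hm
    · simp
    · have : PowerSeries.coeff m (Phi R) = PowerSeries.coeff m R := by rw [hfix]
      simp only [Phi, PowerSeries.coeff_mk] at this
      have h2 : ∑ n ∈ Finset.range m,
          (1 / (n + 1 : ℚ)) * ((2 * n).choose n : ℚ) * ((3 * n).choose n : ℚ)
            * PowerSeries.coeff m (R ^ (n + 1))
          = ∑ n ∈ Finset.range m, c n * PowerSeries.coeff m (R ^ (n + 1)) := rfl
      rw [h2, key m hm]
      linarith

lemma unique_fix {R S : PowerSeries ℚ} (hR : PowerSeries.constantCoeff R = 0)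
    (hS : PowerSeries.constantCoeff S = 0) (hfR : Phi R = R) (hfS : Phi S = S) : R = S := by
  ext m
  induction m using Nat.strong_induction_on with
  | _ m ih =>
    rw [← hfR, ← hfS]
    exact Phi_coeff_eq hR hS ih

end RQuarticAux

theorem R_exists_unique_quartic :
    (∃! R : PowerSeries ℚ, PowerSeries.constantCoeff R = 0 ∧
      ∀ m : ℕ, PowerSeries.coeff m (PowerSeries.X : PowerSeries ℚ)
        = ∑ n ∈ Finset.range m,
            (1 / (n + 1 : ℚ)) * ((2 * n).choose n : ℚ) * ((3 * n).choose n : ℚ)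
              * PowerSeries.coeff m (R ^ (n + 1)))
    ∧ ∀ R : PowerSeries ℚ, PowerSeries.constantCoeff R = 0 →
      (∀ m : ℕ, PowerSeries.coeff m (PowerSeries.X : PowerSeries ℚ)
        = ∑ n ∈ Finset.range m,
            (1 / (n + 1 : ℚ)) * ((2 * n).choose n : ℚ) * ((3 * n).choose n : ℚ)
              * PowerSeries.coeff m (R ^ (n + 1))) →
      PowerSeries.coeff 1 R = 1 ∧ PowerSeries.coeff 2 R = -3 ∧
      PowerSeries.coeff 3 R = -12 ∧ PowerSeries.coeff 4 R = -105 ∧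
      PowerSeries.coeff 5 R = -1206 := by
  open RQuarticAux in
  constructor
  · refine ⟨Rsol, ⟨Rsol_const, (spec_iff Rsol Rsol_const).mpr Phi_Rsol⟩, ?_⟩
    rintro S ⟨hS0, hSspec⟩
    exact unique_fix hS0 Rsol_const ((spec_iff S hS0).mp hSspec) Phi_Rsol
  · intro R hR0 hspec
    have hR0' : PowerSeries.coeff 0 R = 0 := by rwa [PowerSeries.coeff_zero_eq_constantCoeff]
    have cm : ∀ (A B : PowerSeries ℚ) (m : ℕ), PowerSeries.coeff m (A * B)
        = ∑ k ∈ Finset.range (m + 1), PowerSeries.coeff k A * PowerSeries.coeff (m - k) B := by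
      intro A B m
      rw [PowerSeries.coeff_mul, Finset.Nat.sum_antidiagonal_eq_sum_range_succ_mk]
    have e1 := hspec 1
    norm_num [Finset.sum_range_succ, pow_one] at e1
    have r1 : PowerSeries.coeff 1 R = 1 := e1.symm
    have a0 : PowerSeries.coeff 0 (R ^ 2) = 0 := by
      rw [PowerSeries.coeff_zero_eq_constantCoeff, map_pow, hR0]; norm_num
    have a1 : PowerSeries.coeff 1 (R ^ 2) = 0 := by
      rw [pow_two, cm]; norm_num [Finset.sum_range_succ, hR0']
    have a2 : PowerSeries.coeff 2 (R ^ 2) = 1 := by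
      rw [pow_two, cm]
      norm_num [Finset.sum_range_succ, hR0', r1]
    have e2 := hspec 2
    norm_num [Finset.sum_range_succ, pow_one, a2, Nat.choose, PowerSeries.coeff_X] at e2
    have r2 : PowerSeries.coeff 2 R = -3 := by linarith
    have a3 : PowerSeries.coeff 3 (R ^ 2) = -6 := by
      rw [pow_two, cm]
      norm_num [Finset.sum_range_succ, hR0', r1, r2]
    have hp3 : R ^ 3 = R * R ^ 2 := by ring
    have bb0 : PowerSeries.coeff 0 (R ^ 3) = 0 := by
      rw [PowerSeries.coeff_zero_eq_constantCoeff, map_pow, hR0]; norm_num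
    have bb1 : PowerSeries.coeff 1 (R ^ 3) = 0 := by
      rw [hp3, cm]; norm_num [Finset.sum_range_succ, hR0', a0, a1]
    have bb2 : PowerSeries.coeff 2 (R ^ 3) = 0 := by
      rw [hp3, cm]; norm_num [Finset.sum_range_succ, hR0', a0, a1]
    have b3 : PowerSeries.coeff 3 (R ^ 3) = 1 := by
      rw [hp3, cm]
      norm_num [Finset.sum_range_succ, hR0', r1, a0, a1, a2]
    have e3 := hspec 3
    norm_num [Finset.sum_range_succ, pow_one, a3, b3, Nat.choose, PowerSeries.coeff_X] at e3
    have r3 : PowerSeries.coeff 3 R = -12 := by linarith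
    have a4 : PowerSeries.coeff 4 (R ^ 2) = -15 := by
      rw [pow_two, cm]
      norm_num [Finset.sum_range_succ, hR0', r1, r2, r3]
    have b4 : PowerSeries.coeff 4 (R ^ 3) = -9 := by
      rw [hp3, cm]
      norm_num [Finset.sum_range_succ, hR0', r1, r2, a0, a1, a2, a3]
    have hp4 : R ^ 4 = R * R ^ 3 := by ring
    have dd0 : PowerSeries.coeff 0 (R ^ 4) = 0 := by
      rw [PowerSeries.coeff_zero_eq_constantCoeff, map_pow, hR0]; norm_num
    have dd1 : PowerSeries.coeff 1 (R ^ 4) = 0 := by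
      rw [hp4, cm]; norm_num [Finset.sum_range_succ, hR0', bb0, bb1]
    have dd2 : PowerSeries.coeff 2 (R ^ 4) = 0 := by
      rw [hp4, cm]; norm_num [Finset.sum_range_succ, hR0', bb0, bb1, bb2]
    have dd3 : PowerSeries.coeff 3 (R ^ 4) = 0 := by
      rw [hp4, cm]; norm_num [Finset.sum_range_succ, hR0', bb0, bb1, bb2]
    have d4 : PowerSeries.coeff 4 (R ^ 4) = 1 := by
      rw [hp4, cm]
      norm_num [Finset.sum_range_succ, hR0', r1, bb0, bb1, bb2, b3]
    have e4 := hspec 4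
    norm_num [Finset.sum_range_succ, pow_one, a4, b4, d4, Nat.choose, PowerSeries.coeff_X] at e4
    have r4 : PowerSeries.coeff 4 R = -105 := by linarith
    have a5 : PowerSeries.coeff 5 (R ^ 2) = -138 := by
      rw [pow_two, cm]
      norm_num [Finset.sum_range_succ, hR0', r1, r2, r3, r4]
    have b5 : PowerSeries.coeff 5 (R ^ 3) = -9 := by
      rw [hp3, cm]
      norm_num [Finset.sum_range_succ, hR0', r1, r2, r3, a0, a1, a2, a3, a4]
    have d5 : PowerSeries.coeff 5 (R ^ 4) = -12 := by
      rw [hp4, cm]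
      norm_num [Finset.sum_range_succ, hR0', r1, r2, bb0, bb1, bb2, b3, b4]
    have hp5 : R ^ 5 = R * R ^ 4 := by ring
    have f5 : PowerSeries.coeff 5 (R ^ 5) = 1 := by
      rw [hp5, cm]
      norm_num [Finset.sum_range_succ, hR0', r1, dd0, dd1, dd2, dd3, d4]
    have e5 := hspec 5
    norm_num [Finset.sum_range_succ, pow_one, a5, b5, d5, f5, Nat.choose, PowerSeries.coeff_X] at e5
    have r5 : PowerSeries.coeff 5 R = -1206 := by linarith
    exact ⟨r1, r2, r3, r4, r5⟩
end

section
/- For each n ≥ 0, the inner double sum collapses: ∑_{j=0}^{n} (1/(n+1))·C(2n−j, n)·C(3n−j+1, 2n−j) = (3n+2)/(2(n+1)²)·C(2n,n)·C(3n+1, 2n). -/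
lemma key1 (n k : ℕ) :
    (n + k).choose n * (2 * n + k + 1).choose (n + k)
      = (2 * n + 1).choose n * (2 * n + k + 1).choose (2 * n + 1) := by
  have h1 := Nat.choose_mul (n := 2 * n + k + 1) (k := n + k) (s := n)
    (by omega)
  have h2 := Nat.choose_mul (n := 2 * n + k + 1) (k := 2 * n + 1) (s := n)
    (by omega)
  have e1 : 2 * n + k + 1 - n = n + k + 1 := by omega
  have e2 : n + k - n = k := by omega
  have e3 : 2 * n + 1 - n = n + 1 := by omega
  rw [e1, e2] at h1
  rw [e1, e3] at h2
  have hsymm : (n + k + 1).choose k = (n + k + 1).choose (n + 1) := by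
    rw [← Nat.choose_symm (by omega : n + 1 ≤ n + k + 1)]
    congr 1
    omega
  rw [mul_comm ((n + k).choose n), h1, hsymm, ← h2]
  ring

lemma key2 (n : ℕ) :
    2 * (n + 1) * ((2 * n + 1).choose n * (3 * n + 2).choose (2 * n + 2))
      = (3 * n + 2) * ((2 * n).choose n * (3 * n + 1).choose (2 * n)) := by
  have h0 : (3 * n + 1) + 1 = 3 * n + 2 := by omega
  have h1 := Nat.add_one_mul_choose_eq (3 * n + 1) (2 * n + 1)
  -- (3n+2) * C(3n+1, 2n+1) = C(3n+2, 2n+2) * (2n+2)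
  have h2 := Nat.choose_mul (n := 3 * n + 1) (k := 2 * n + 1) (s := n)
    (by omega)
  have h3 := Nat.choose_mul (n := 3 * n + 1) (k := 2 * n) (s := n)
    (by omega)
  have e1 : 3 * n + 1 - n = 2 * n + 1 := by omega
  have e2 : 2 * n + 1 - n = n + 1 := by omega
  have e3 : 2 * n - n = n := by omega
  rw [e1, e2] at h2
  rw [e1, e3] at h3
  have hsymm : (2 * n + 1).choose (n + 1) = (2 * n + 1).choose n := by
    rw [← Nat.choose_symm (by omega : n ≤ 2 * n + 1)]
    congr 1
    omega
  have key : (2 * n + 1).choose n * (3 * n + 1).choose (2 * n + 1)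
      = (2 * n).choose n * (3 * n + 1).choose (2 * n) := by
    rw [mul_comm, h2, hsymm, mul_comm ((2 * n).choose n), h3]
  calc 2 * (n + 1) * ((2 * n + 1).choose n * (3 * n + 2).choose (2 * n + 2))
      = (2 * n + 1).choose n * ((3 * n + 2).choose (2 * n + 2) * (2 * n + 2)) := by ring
    _ = (2 * n + 1).choose n * ((3 * n + 2) * (3 * n + 1).choose (2 * n + 1)) := by
        have h1' : (3 * n + 2) * (3 * n + 1).choose (2 * n + 1)
            = (3 * n + 2).choose (2 * n + 2) * (2 * n + 2) := by
          simpa [Nat.succ_eq_add_one, Nat.add_assoc] using h1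
        rw [← h1']
    _ = (3 * n + 2) * ((2 * n).choose n * (3 * n + 1).choose (2 * n)) := by
        rw [← mul_assoc, mul_comm ((2 * n + 1).choose n), mul_assoc, key]

lemma sumN (n : ℕ) :
    ∑ j ∈ Finset.range (n + 1), (2 * n - j).choose n * (3 * n - j + 1).choose (2 * n - j)
      = (2 * n + 1).choose n * (3 * n + 2).choose (2 * n + 2) := by
  have step1 : ∀ j ∈ Finset.range (n + 1),
      (2 * n - j).choose n * (3 * n - j + 1).choose (2 * n - j)
        = (2 * n + 1).choose n * (3 * n - j + 1).choose (2 * n + 1) := by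
    intro j hj
    rw [Finset.mem_range] at hj
    have hk := key1 n (n - j)
    have e1 : n + (n - j) = 2 * n - j := by omega
    have e2 : 2 * n + (n - j) + 1 = 3 * n - j + 1 := by omega
    rw [e1, e2] at hk
    exact hk
  rw [Finset.sum_congr rfl step1, ← Finset.mul_sum]
  congr 1
  have : ∀ j ∈ Finset.range (n + 1),
      (3 * n - j + 1).choose (2 * n + 1) = ((n - j) + (2 * n + 1)).choose (2 * n + 1) := by
    intro j hj
    rw [Finset.mem_range] at hj
    congr 1
    omega
  rw [Finset.sum_congr rfl this]
  have hr := Finset.sum_range_reflect (fun i => (i + (2 * n + 1)).choose (2 * n + 1)) (n + 1)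
  simp only [Nat.add_sub_cancel] at hr
  rw [hr, Nat.sum_range_add_choose n (2 * n + 1)]
  congr 1 <;> omega

theorem choose_sum_identity_16 (n : ℕ) :
    ∑ j ∈ Finset.range (n + 1),
        (1 / (n + 1 : ℚ)) * ((2 * n - j).choose n : ℚ) * ((3 * n - j + 1).choose (2 * n - j) : ℚ)
      = ((3 * n + 2 : ℚ) / (2 * (n + 1 : ℚ) ^ 2))
          * ((2 * n).choose n : ℚ) * ((3 * n + 1).choose (2 * n) : ℚ) := by
  have hs : ∑ j ∈ Finset.range (n + 1),
      (1 / (n + 1 : ℚ)) * ((2 * n - j).choose n : ℚ) * ((3 * n - j + 1).choose (2 * n - j) : ℚ)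
      = (1 / (n + 1 : ℚ)) * ((∑ j ∈ Finset.range (n + 1),
          (2 * n - j).choose n * (3 * n - j + 1).choose (2 * n - j) : ℕ) : ℚ) := by
    push_cast
    rw [Finset.mul_sum]
    exact Finset.sum_congr rfl fun j _ => by ring
  rw [hs, sumN n]
  have h2 := key2 n
  have h2q : (2 * (n + 1) * ((2 * n + 1).choose n * (3 * n + 2).choose (2 * n + 2)) : ℚ)
      = ((3 * n + 2) * ((2 * n).choose n * (3 * n + 1).choose (2 * n)) : ℚ) := by
    exact_mod_cast congrArg (Nat.cast : ℕ → ℚ) h2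
  have hn : (n + 1 : ℚ) ≠ 0 := by positivity
  push_cast at h2q ⊢
  field_simp
  linear_combination h2q
end

section
/- Define Q(t) := (1/(3t²))·(t − 3t² − R(t)) where R ∈ ℚ[[t]] is the unique series with zero constant term satisfying t = ∑_{n≥0} (1/(n+1))·C(2n,n)·C(3n,n)·R^{n+1}. Then the coefficients of t, t², t³ in Q are 4, 35, 402 respectively. -/
open PowerSeries
set_option maxHeartbeats 1000000

theorem Q_initial_coeffs (R Q : PowerSeries ℚ)
    (h0 : PowerSeries.constantCoeff R = 0)
    (hR : ∀ m : ℕ, PowerSeries.coeff m (PowerSeries.X : PowerSeries ℚ)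
      = ∑ n ∈ Finset.range m,
          (1 / (n + 1 : ℚ)) * ((2 * n).choose n : ℚ) * ((3 * n).choose n : ℚ)
            * PowerSeries.coeff m (R ^ (n + 1)))
    (hQ : 3 * PowerSeries.X ^ 2 * Q = PowerSeries.X - 3 * PowerSeries.X ^ 2 - R) :
    PowerSeries.coeff 1 Q = 4 ∧ PowerSeries.coeff 2 Q = 35 ∧
      PowerSeries.coeff 3 Q = 402 := by
  have hc0 : coeff 0 R = 0 := by rwa [coeff_zero_eq_constantCoeff]
  have e1 := hR 1
  have e2 := hR 2
  have e3 := hR 3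
  have e4 := hR 4
  have e5 := hR 5
  simp [Finset.sum_range_succ, pow_succ, coeff_mul,
    Finset.Nat.sum_antidiagonal_eq_sum_range_succ_mk, coeff_X, h0, hc0] at e1 e2 e3 e4 e5
  have hr1 : coeff 1 R = 1 := e1.symm
  rw [hr1] at e2 e3 e4 e5
  have hr2 : coeff 2 R = -3 := by norm_num [Nat.choose] at e2; linarith
  rw [hr2] at e3 e4 e5
  have hr3 : coeff 3 R = -12 := by norm_num [Nat.choose] at e3; linarith
  rw [hr3] at e4 e5
  have hr4 : coeff 4 R = -105 := by norm_num [Nat.choose] at e4; linarith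
  rw [hr4] at e5
  have hr5 : coeff 5 R = -1206 := by norm_num [Nat.choose] at e5; linarith
  have key : ∀ d : ℕ, (3:ℚ) * coeff d Q
      = - coeff (d+2) R + (if d + 2 = 1 then 1 else 0) - (if d = 0 then 3 else 0) := by
    intro d
    have h := congrArg (coeff (d+2)) hQ
    rw [show (3 : ℚ⟦X⟧) * X ^ 2 * Q = X ^ 2 * (C 3 * Q) by simp [map_ofNat]; ring,
      show (3 : ℚ⟦X⟧) * X ^ 2 = X ^ 2 * C 3 by simp [map_ofNat]; ring] at h
    rw [coeff_X_pow_mul, map_sub, map_sub, coeff_X_pow_mul, coeff_C_mul, coeff_C, coeff_X] at h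
    rw [h]; ring
  have k1 := key 1
  have k2 := key 2
  have k3 := key 3
  rw [hr3] at k1
  rw [hr4] at k2
  rw [hr5] at k3
  norm_num at k1 k2 k3
  exact ⟨by linarith, by linarith, by linarith⟩
end

section
/- The series F(r) = ∑_{n≥0} ((3n+2)/(2(n+1)))·C(2n,n)·C(3n+1, 2n)·r^n has nth coefficient asymptotic to c·27^n/n for some constant c > 0; consequently the coefficient ratio [r^n]F·n/27^n converges to a positive constant. In particular, [r^n]F grows like 27^n up to a factor of order 1/n. -/
open Filter Real


private lemma coeff_eq (n : ℕ) :
    (((3 * n + 2 : ℚ) / (2 * (n + 1 : ℚ))) * ((2 * n).choose n : ℚ)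
        * ((3 * n + 1).choose (2 * n) : ℚ))
      = ((3 * n + 2).factorial : ℚ)
        / (2 * (n + 1) * ((n.factorial : ℚ))^2 * ((n+1).factorial : ℚ)) := by
  have h1 : n ≤ 2 * n := by omega
  have h2 : 2 * n ≤ 3 * n + 1 := by omega
  rw [Nat.cast_choose ℚ h1, Nat.cast_choose ℚ h2,
    show 2 * n - n = n by omega, show 3 * n + 1 - 2 * n = n + 1 by omega,
    show (3*n+2).factorial = (3*n+2) * (3*n+1).factorial by
      rw [show 3*n+2 = (3*n+1)+1 by ring]; exact Nat.factorial_succ _]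
  have hf : ∀ m : ℕ, ((m.factorial : ℚ)) ≠ 0 := fun m =>
    Nat.cast_ne_zero.mpr (Nat.factorial_ne_zero m)
  have hn1 : ((n : ℚ) + 1) ≠ 0 := by positivity
  push_cast
  field_simp

private lemma pow_key (n : ℕ) (x E : ℝ) (hx : 0 < x) (hE : E ≠ 0) :
    ((3*x+2)/E)^(3*n+2)
      = (9 / E) * ((1 + (2/3)/x)^n)^2 * ((1 + (-(1/3))/(x+1))^(n+1))
        * (x + 2/3) * 27^n * (x/E)^(2*n) * ((x+1)/E)^(n+1) := by
  have hx1 : (0:ℝ) < x + 1 := by linarith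
  have e1 : 1 + (2/3)/x = (x + 2/3)/x := by field_simp
  have e2 : 1 + (-(1/3))/(x+1) = (x + 2/3)/(x+1) := by field_simp; ring
  have h27 : (3:ℝ)^(3*n+2) = 9 * 27^n := by
    rw [pow_add, pow_mul]; norm_num; ring
  rw [e1, e2, show (3*x+2) = 3*(x+2/3) by ring, mul_div_assoc, mul_pow, h27]
  rw [div_pow, div_pow, div_pow, div_pow]
  rw [div_pow, div_pow]
  field_simp
  ring

private lemma fact_eq (m : ℕ) (hm : m ≠ 0) :
    ((m.factorial : ℝ)) = Stirling.stirlingSeq m * (Real.sqrt (2*m) * ((m:ℝ)/Real.exp 1)^m) := by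
  have hm' : (0:ℝ) < m := by exact_mod_cast Nat.pos_of_ne_zero hm
  have h : Real.sqrt (2*(m:ℝ)) * ((m:ℝ)/Real.exp 1)^m ≠ 0 := by positivity
  rw [Stirling.stirlingSeq, div_mul_cancel₀ _ h]

private lemma stirling_ne (m : ℕ) (hm : m ≠ 0) : Stirling.stirlingSeq m ≠ 0 := by
  obtain ⟨k, rfl⟩ := Nat.exists_eq_succ_of_ne_zero hm
  exact (Stirling.stirlingSeq'_pos k).ne'

private lemma main_eq (n : ℕ) (hn : 1 ≤ n) :
    ((((3 * n + 2 : ℚ) / (2 * (n + 1 : ℚ))) * ((2 * n).choose n : ℚ)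
        * ((3 * n + 1).choose (2 * n) : ℚ) : ℚ) : ℝ) * (n : ℝ) / 27 ^ n
    = (Stirling.stirlingSeq (3*n+2) / ((Stirling.stirlingSeq n)^2 * Stirling.stirlingSeq (n+1)))
        * ((1 + (2/3)/(n:ℝ))^n)^2 * ((1 + (-(1/3))/((n:ℝ)+1))^(n+1))
        * (9 / Real.exp 1)
        * ((Real.sqrt (2*(3*(n:ℝ)+2)) / Real.sqrt (2*((n:ℝ)+1)))
            * (((n:ℝ)+2/3)/((n:ℝ)+1)) * (1/4)) := by
  have hx : (0:ℝ) < n := by exact_mod_cast hn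
  have hb : ((((3 * n + 2 : ℚ) / (2 * (n + 1 : ℚ))) * ((2 * n).choose n : ℚ)
        * ((3 * n + 1).choose (2 * n) : ℚ) : ℚ) : ℝ)
      = ((3*n+2).factorial : ℝ)
        / (2 * ((n:ℝ) + 1) * ((n.factorial : ℝ))^2 * ((n+1).factorial : ℝ)) := by
    rw [show ((((3 * n + 2 : ℚ) / (2 * (n + 1 : ℚ))) * ((2 * n).choose n : ℚ)
        * ((3 * n + 1).choose (2 * n) : ℚ) : ℚ) : ℝ)
      = (((((3 * n + 2).factorial : ℚ)
        / (2 * (n + 1) * ((n.factorial : ℚ))^2 * ((n+1).factorial : ℚ))) : ℚ) : ℝ) from by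
        rw [coeff_eq]]
    push_cast
    ring
  rw [hb, fact_eq (3*n+2) (by omega), fact_eq n (by omega), fact_eq (n+1) (by omega)]
  push_cast
  obtain ⟨E, hEpos, hEeq⟩ : ∃ E : ℝ, 0 < E ∧ Real.exp 1 = E := ⟨_, Real.exp_pos 1, rfl⟩
  rw [hEeq, pow_key n (n:ℝ) E hx hEpos.ne']
  have hsq : Real.sqrt (2*(n:ℝ))^2 = 2*(n:ℝ) := Real.sq_sqrt (by positivity)
  rw [mul_pow, mul_pow, hsq]
  have h1 : Stirling.stirlingSeq n ≠ 0 := stirling_ne n (by omega)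
  have h2 : Stirling.stirlingSeq (n+1) ≠ 0 := stirling_ne (n+1) (by omega)
  have h3 : Real.sqrt (2*((n:ℝ)+1)) ≠ 0 := by positivity
  have h4 : ((n:ℝ)+1) ≠ 0 := by positivity
  have h5 : (27:ℝ)^n ≠ 0 := by positivity
  have h6 : E ≠ 0 := hEpos.ne'
  field_simp
  ring

private lemma tends_main :
    Filter.Tendsto
      (fun n : ℕ =>
        (Stirling.stirlingSeq (3*n+2) / ((Stirling.stirlingSeq n)^2 * Stirling.stirlingSeq (n+1)))
          * ((1 + (2/3)/(n:ℝ))^n)^2 * ((1 + (-(1/3))/((n:ℝ)+1))^(n+1))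
          * (9 / Real.exp 1)
          * ((Real.sqrt (2*(3*(n:ℝ)+2)) / Real.sqrt (2*((n:ℝ)+1)))
              * (((n:ℝ)+2/3)/((n:ℝ)+1)) * (1/4)))
      Filter.atTop
      (nhds ((Real.sqrt π / ((Real.sqrt π)^2 * Real.sqrt π))
        * (Real.exp (2/3))^2 * (Real.exp (-(1/3))) * (9 / Real.exp 1)
        * (Real.sqrt 3 * 1 * (1/4)))) := by
  have hpi : (0:ℝ) < Real.sqrt π := Real.sqrt_pos.mpr Real.pi_pos
  have hS := Stirling.tendsto_stirlingSeq_sqrt_pi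
  have hS3 : Tendsto (fun n : ℕ => Stirling.stirlingSeq (3*n+2)) atTop (nhds (Real.sqrt π)) :=
    hS.comp (tendsto_atTop_mono (fun n => by simp only [id_eq]; omega) tendsto_id)
  have hS1 : Tendsto (fun n : ℕ => Stirling.stirlingSeq (n+1)) atTop (nhds (Real.sqrt π)) :=
    hS.comp (tendsto_atTop_mono (fun n => by simp only [id_eq]; omega) tendsto_id)
  have hquot : Tendsto (fun n : ℕ =>
      Stirling.stirlingSeq (3*n+2) / ((Stirling.stirlingSeq n)^2 * Stirling.stirlingSeq (n+1)))
      atTop (nhds (Real.sqrt π / ((Real.sqrt π)^2 * Real.sqrt π))) :=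
    hS3.div (((hS.pow 2).mul hS1)) (by positivity)
  have hA : Tendsto (fun n : ℕ => ((1 + (2/3)/(n:ℝ))^n)^2) atTop (nhds ((Real.exp (2/3))^2)) :=
    (Real.tendsto_one_add_div_pow_exp (2/3)).pow 2
  have hB : Tendsto (fun n : ℕ => (1 + (-(1/3))/((n:ℝ)+1))^(n+1)) atTop
      (nhds (Real.exp (-(1/3)))) := by
    have := (Real.tendsto_one_add_div_pow_exp (-(1/3))).comp (tendsto_add_atTop_nat 1)
    refine this.congr fun n => ?_
    simp [Function.comp]
  have hinv : Tendsto (fun n : ℕ => 1/((n:ℝ)+1)) atTop (nhds 0) :=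
    tendsto_one_div_add_atTop_nhds_zero_nat
  have hsqrt : Tendsto (fun n : ℕ =>
      Real.sqrt (2*(3*(n:ℝ)+2)) / Real.sqrt (2*((n:ℝ)+1))) atTop (nhds (Real.sqrt 3)) := by
    have hin : Tendsto (fun n : ℕ => (3:ℝ) - 1/((n:ℝ)+1)) atTop (nhds 3) := by
      simpa using tendsto_const_nhds.sub hinv
    have h := (Real.continuous_sqrt.tendsto 3).comp hin
    refine h.congr fun n => ?_
    have h4 : ((n:ℝ)+1) ≠ 0 := by positivity
    have : (3:ℝ) - 1/((n:ℝ)+1) = (2*(3*(n:ℝ)+2)) / (2*((n:ℝ)+1)) := by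
      field_simp; ring
    simp only [Function.comp]
    rw [this, Real.sqrt_div (by positivity)]
  have hfrac : Tendsto (fun n : ℕ => ((n:ℝ)+2/3)/((n:ℝ)+1)) atTop (nhds 1) := by
    have hin : Tendsto (fun n : ℕ => (1:ℝ) - (1/3) * (1/((n:ℝ)+1))) atTop (nhds 1) := by
      have h0 : Tendsto (fun n : ℕ => (1/3 : ℝ) * (1/((n:ℝ)+1))) atTop (nhds 0) := by
        simpa using hinv.const_mul (1/3 : ℝ)
      simpa using (tendsto_const_nhds (x := (1:ℝ)) (f := atTop)).sub h0
    refine hin.congr fun n => ?_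
    have h4 : ((n:ℝ)+1) ≠ 0 := by positivity
    field_simp
    ring
  exact ((((hquot.mul hA).mul hB).mul tendsto_const_nhds).mul
    ((hsqrt.mul hfrac).mul tendsto_const_nhds))

theorem F_coeff_asymptotics :
    ∃ c : ℝ, 0 < c ∧ Filter.Tendsto
      (fun n : ℕ =>
        ((((3 * n + 2 : ℚ) / (2 * (n + 1 : ℚ))) * ((2 * n).choose n : ℚ)
            * ((3 * n + 1).choose (2 * n) : ℚ) : ℚ) : ℝ) * (n : ℝ) / 27 ^ n)
      Filter.atTop (nhds c) := by
  refine ⟨(Real.sqrt π / ((Real.sqrt π)^2 * Real.sqrt π))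
      * (Real.exp (2/3))^2 * (Real.exp (-(1/3))) * (9 / Real.exp 1)
      * (Real.sqrt 3 * 1 * (1/4)), ?_, ?_⟩
  · have hpi : (0:ℝ) < Real.sqrt π := Real.sqrt_pos.mpr Real.pi_pos
    have h3 : (0:ℝ) < Real.sqrt 3 := Real.sqrt_pos.mpr (by norm_num)
    positivity
  · refine tends_main.congr' ?_
    filter_upwards [Filter.eventually_ge_atTop 1] with n hn
    exact (main_eq n hn).symm
end
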